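/- arXiv:2402.12961 — 6 statements merged into one kernel-verified Lean document; each statement's English description precedes it below -/
import Mathlib

section
/- Let T ∈ B_{A^{1/2}}(H) and let S ∈ B_{A^{1/2}}(H) be the A^{1/2}-adjoint T^⋄ of T. Then every λ ∈ σ_A(T) satisfies |λ| ≤ max{‖T‖_A, ‖S‖_A}; in particular, σ_A(T) is a bounded subset of ℂ. -/
variable {H : Type*} [NormedAddCommGroup H] [InnerProductSpace ℂ H] [CompleteSpace H]

/-- The semi-norm `‖x‖_A = ⟨Ax, x⟩^{1/2}` induced by a positive operator `A`. -/
noncomputable def anorm (A : H →L[ℂ] H) (x : H) : ℝ :=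
  Real.sqrt (RCLike.re (inner ℂ (A x) x : ℂ))

/-- Membership in `B_{A^{1/2}}(H)`: there is `c > 0` with `‖Tx‖_A ≤ c ‖x‖_A` for all `x`. -/
def MemBA (A T : H →L[ℂ] H) : Prop :=
  ∃ c > 0, ∀ x : H, anorm A (T x) ≤ c * anorm A x

/-- The `A`-operator seminorm `‖T‖_A`: the least `c ≥ 0` with `‖Tx‖_A ≤ c ‖x‖_A` for all `x`. -/
noncomputable def opANorm (A T : H →L[ℂ] H) : ℝ :=
  sInf {c : ℝ | 0 ≤ c ∧ ∀ x : H, anorm A (T x) ≤ c * anorm A x}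

/-- `T` is `A`-invertible in `B_{A^{1/2}}(H)`. -/
def AInv (A T : H →L[ℂ] H) : Prop :=
  T ≠ 0 ∧ ∃ S : H →L[ℂ] H, S ≠ 0 ∧ MemBA A S ∧
    A.comp (T.comp S) = A ∧ A.comp (S.comp T) = A

/-- The `A`-resolvent set `ρ_A(T)`. -/
def rhoA (A T : H →L[ℂ] H) : Set ℂ :=
  {lam : ℂ | AInv A (lam • (1 : H →L[ℂ] H) - T)}

/-- The `A`-spectrum `σ_A(T)`. -/
def sigmaA (A T : H →L[ℂ] H) : Set ℂ := (rhoA A T)ᶜ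

/-- The `A`-spectral radius `r_A(T) = inf_{n ≥ 1} ‖T^n‖_A^{1/n}`. -/
noncomputable def rA (A T : H →L[ℂ] H) : ℝ :=
  ⨅ n : ℕ+, (opANorm A (T ^ (n : ℕ))) ^ ((((n : ℕ) : ℝ))⁻¹)

/-- `sup {|λ| : λ ∈ σ_A(T)}`. -/
noncomputable def supSpecA (A T : H →L[ℂ] H) : ℝ :=
  sSup ((fun z : ℂ => ‖z‖) '' sigmaA A T)

/-- `S` is the `A^{1/2}`-adjoint `T^⋄` of `T`. -/
def IsDiamond (sqrtA T S : H →L[ℂ] H) : Prop :=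
  sqrtA.comp S = (ContinuousLinearMap.adjoint T).comp sqrtA ∧
    Set.range (⇑S) ⊆ closure (Set.range (⇑sqrtA))

/-- The orthogonal projection of `H` onto the closure of the range of `A`. -/
noncomputable def projA (A : H →L[ℂ] H) : H →L[ℂ] H :=
  haveI : CompleteSpace ((LinearMap.range (A : H →ₗ[ℂ] H)).topologicalClosure : Submodule ℂ H) :=
    (Submodule.isClosed_topologicalClosure _).completeSpace_coe
  ((LinearMap.range (A : H →ₗ[ℂ] H)).topologicalClosure.subtypeL).comp
    (Submodule.orthogonalProjectionOnto (LinearMap.range (A : H →ₗ[ℂ] H)).topologicalClosure)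

lemma exists_comp_eq (P B : H →L[ℂ] H) (c : ℝ) (hc : 0 ≤ c)
    (hbd : ∀ x, ‖B x‖ ≤ c * ‖P x‖) :
    ∃ D : H →L[ℂ] H, D.comp P = B ∧ ∀ y, ‖D y‖ ≤ c * ‖y‖ := by
  set K : Submodule ℂ H := LinearMap.range (P : H →ₗ[ℂ] H) with hK
  set N : Submodule ℂ H := K.topologicalClosure with hN
  haveI : CompleteSpace N := (Submodule.isClosed_topologicalClosure _).completeSpace_coe
  have hwd : ∀ x y : H, P x = P y → B x = B y := by
    intro x y h
    have h2 : ‖B x - B y‖ ≤ c * ‖P x - P y‖ := by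
      simpa [map_sub] using hbd (x - y)
    rw [h, sub_self, norm_zero, mul_zero] at h2
    exact sub_eq_zero.mp (norm_le_zero_iff.mp h2)
  have hsurj : ∀ u : K, ∃ x, P x = (u : H) := fun u => LinearMap.mem_range.mp u.2
  choose pre hpre using hsurj
  let f₀ : K →ₗ[ℂ] H :=
    { toFun := fun u => B (pre u)
      map_add' := by
        intro u v
        show B (pre (u + v)) = B (pre u) + B (pre v)
        have h1 : P (pre (u + v)) = P (pre u + pre v) := by
          rw [map_add, hpre, hpre, hpre]; rfl
        rw [hwd _ _ h1, map_add]
      map_smul' := by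
        intro a u
        show B (pre (a • u)) = a • B (pre u)
        have h1 : P (pre (a • u)) = P (a • pre u) := by
          rw [map_smul, hpre, hpre]; rfl
        rw [hwd _ _ h1, map_smul] }
  have hf₀ : ∀ u : K, ‖f₀ u‖ ≤ c * ‖u‖ := by
    intro u
    have h1 := hbd (pre u)
    rw [hpre u] at h1
    exact h1
  let f : K →L[ℂ] H := f₀.mkContinuous c hf₀
  let e₀ : K →ₗ[ℂ] N := Submodule.inclusion (Submodule.le_topologicalClosure K)
  have he₀ : ∀ u : K, ‖e₀ u‖ = ‖u‖ := fun u => rfl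
  let e : K →L[ℂ] N := e₀.mkContinuous 1 (fun u => by rw [he₀, one_mul])
  have hebd : ∀ u : K, ‖u‖ ≤ (1 : NNReal) * ‖e u‖ := fun u => by
    rw [NNReal.coe_one, one_mul]; exact le_of_eq (he₀ u).symm
  have hdense : DenseRange e := by
    intro y
    rw [closure_subtype]
    have himg : (Subtype.val '' Set.range e) = (K : Set H) := by
      ext z
      constructor
      · rintro ⟨w, ⟨u, rfl⟩, rfl⟩; exact u.2
      · intro hz; exact ⟨e ⟨z, hz⟩, ⟨⟨z, hz⟩, rfl⟩, rfl⟩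
    rw [himg, ← Submodule.topologicalClosure_coe]
    exact y.2
  have hui := (ContinuousLinearMap.isUniformEmbedding_of_bound (f := e) hebd).isUniformInducing
  let D₀ : ↥N →L[ℂ] H := f.extend e
  have hD₀ : ‖D₀‖ ≤ (1:NNReal) * ‖f‖ := f.opNorm_extend_le (e := e) hdense hebd
  have hfle : ‖f‖ ≤ c := f₀.mkContinuous_norm_le hc hf₀
  refine ⟨D₀.comp (Submodule.orthogonalProjectionOnto N), ?_, ?_⟩
  · ext x
    have hxK : P x ∈ K := LinearMap.mem_range_self _ x
    have hxN : P x ∈ N := Submodule.le_topologicalClosure K hxK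
    have hproj : Submodule.orthogonalProjectionOnto N (P x) = ⟨P x, hxN⟩ :=
      Submodule.orthogonalProjectionOnto_mem_subspace_eq_self (⟨P x, hxN⟩ : N)
    have heq : (⟨P x, hxN⟩ : N) = e ⟨P x, hxK⟩ := rfl
    have hext : D₀ (e ⟨P x, hxK⟩) = f ⟨P x, hxK⟩ := ContinuousLinearMap.extend_eq f (e := e) hdense hui _
    have hfval : f ⟨P x, hxK⟩ = B x := hwd _ _ (hpre ⟨P x, hxK⟩)
    simp only [ContinuousLinearMap.comp_apply, hproj, heq, hext, hfval]
  · intro y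
    calc ‖D₀ (Submodule.orthogonalProjectionOnto N y)‖ ≤ ‖D₀‖ * ‖Submodule.orthogonalProjectionOnto N y‖ :=
          D₀.le_opNorm _
      _ ≤ (1 * ‖f‖) * (1 * ‖y‖) := by
          apply mul_le_mul
          · simpa using hD₀
          · simpa using (Submodule.orthogonalProjectionOnto N).le_opNorm y |>.trans
              (by have := Submodule.orthogonalProjectionOnto_norm_le N; nlinarith [norm_nonneg y])
          · exact norm_nonneg _
          · positivity
      _ ≤ c * ‖y‖ := by
          rw [one_mul, one_mul]
          exact mul_le_mul_of_nonneg_right hfle (norm_nonneg y)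

lemma anorm_eq_norm_sqrt (A sqrtA : H →L[ℂ] H) (hsqrt : sqrtA.IsPositive)
    (hsq : sqrtA.comp sqrtA = A) (x : H) : anorm A x = ‖sqrtA x‖ := by
  have hsa : ContinuousLinearMap.adjoint sqrtA = sqrtA := ContinuousLinearMap.isSelfAdjoint_iff'.mp hsqrt.isSelfAdjoint
  have h1 : A x = sqrtA (sqrtA x) := by rw [← hsq]; rfl
  have h2 : (inner ℂ (A x) x : ℂ) = inner ℂ (sqrtA x) (sqrtA x) := by
    have h3 := ContinuousLinearMap.adjoint_inner_left sqrtA x (sqrtA x)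
    rw [hsa] at h3
    rw [h1, h3]
  rw [anorm, h2, inner_self_eq_norm_sq, Real.sqrt_sq (norm_nonneg _)]

theorem stmt11 (A sqrtA T S : H →L[ℂ] H) (hA : A.IsPositive) (hA0 : A ≠ 0)
    (hsqrt : sqrtA.IsPositive) (hsq : sqrtA.comp sqrtA = A)
    (hT : MemBA A T) (hSmem : MemBA A S) (hS : IsDiamond sqrtA T S) :
    (∀ lam ∈ sigmaA A T, ‖lam‖ ≤ max (opANorm A T) (opANorm A S)) ∧
      Bornology.IsBounded (sigmaA A T) := by
  have han : ∀ x, anorm A x = ‖sqrtA x‖ := anorm_eq_norm_sqrt A sqrtA hsqrt hsq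
  haveI : Nontrivial H := by
    by_contra hcon
    rw [not_nontrivial_iff_subsingleton] at hcon
    exact hA0 (by ext x; exact Subsingleton.elim _ _)
  -- the key claim
  have key : ∀ lam : ℂ, max (opANorm A T) (opANorm A S) < ‖lam‖ → lam ∈ rhoA A T := by
    intro lam hlam
    set ST : Set ℝ := {c : ℝ | 0 ≤ c ∧ ∀ x : H, anorm A (T x) ≤ c * anorm A x} with hST
    set SS : Set ℝ := {c : ℝ | 0 ≤ c ∧ ∀ x : H, anorm A (S x) ≤ c * anorm A x} with hSS
    obtain ⟨c1, hc1, hb1⟩ := hT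
    obtain ⟨c2, hc2, hb2⟩ := hSmem
    have hTn : ST.Nonempty := ⟨c1, le_of_lt hc1, hb1⟩
    have hSn : SS.Nonempty := ⟨c2, le_of_lt hc2, hb2⟩
    have hbdd : BddBelow ST := ⟨0, fun c hc => hc.1⟩
    have hbddS : BddBelow SS := ⟨0, fun c hc => hc.1⟩
    obtain ⟨cT, hcTm, hcTlt⟩ := (csInf_lt_iff hbdd hTn).mp
      (lt_of_le_of_lt (le_max_left _ _) hlam)
    obtain ⟨cS, hcSm, hcSlt⟩ := (csInf_lt_iff hbddS hSn).mp
      (lt_of_le_of_lt (le_max_right _ _) hlam)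
    -- bound in sqrt form
    have hbT : ∀ x, ‖(sqrtA.comp T) x‖ ≤ cT * ‖sqrtA x‖ := by
      intro x
      have := hcTm.2 x
      rwa [han, han] at this
    obtain ⟨Z, hZc, hZn⟩ := exists_comp_eq sqrtA (sqrtA.comp T) cT hcTm.1 hbT
    have hZnorm : ‖Z‖ ≤ cT := ContinuousLinearMap.opNorm_le_bound Z hcTm.1 hZn
    -- lam in resolvent of Z
    have hres : lam ∈ resolventSet ℂ Z :=
      spectrum.mem_resolventSet_of_norm_lt (lt_of_le_of_lt hZnorm hcTlt)
    have hunit : IsUnit (lam • (1 : H →L[ℂ] H) - Z) := by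
      have := hres
      rw [resolventSet, Set.mem_setOf_eq] at this
      rwa [Algebra.algebraMap_eq_smul_one] at this
    set L : H →L[ℂ] H := lam • (1 : H →L[ℂ] H) - Z with hL
    set R : H →L[ℂ] H := ↑hunit.unit⁻¹ with hR
    have hLR : L * R = 1 := hunit.mul_val_inv
    have hRL : R * L = 1 := hunit.val_inv_mul
    -- adjoint identities
    have hsa : ContinuousLinearMap.adjoint sqrtA = sqrtA := ContinuousLinearMap.isSelfAdjoint_iff'.mp hsqrt.isSelfAdjoint
    have hZad : sqrtA.comp (ContinuousLinearMap.adjoint Z) = sqrtA.comp S := by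
      have h1 := congrArg ContinuousLinearMap.adjoint hZc
      rw [ContinuousLinearMap.adjoint_comp, ContinuousLinearMap.adjoint_comp, hsa] at h1
      rw [h1, hS.1]
    have hlamS : 0 < ‖lam‖ - cS := by linarith
    -- bound for sqrtA ∘ R†
    have hbR : ∀ x, ‖(sqrtA.comp (ContinuousLinearMap.adjoint R)) x‖ ≤
        (‖lam‖ - cS)⁻¹ * ‖sqrtA x‖ := by
      intro x
      set v := ContinuousLinearMap.adjoint R x with hv
      have hx : x = ContinuousLinearMap.adjoint L v := by
        have h1 : ContinuousLinearMap.adjoint L ∘L ContinuousLinearMap.adjoint R = 1 := by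
          rw [← ContinuousLinearMap.adjoint_comp]
          have : R ∘L L = 1 := hRL
          rw [this]
          rw [ContinuousLinearMap.one_def, ContinuousLinearMap.adjoint_id]
        have h2 := ContinuousLinearMap.ext_iff.1 h1 x
        simpa [hv] using h2.symm
      have hLad : ContinuousLinearMap.adjoint L =
          (starRingEnd ℂ) lam • (1 : H →L[ℂ] H) - ContinuousLinearMap.adjoint Z := by
        rw [hL, map_sub]
        congr 1
        rw [← ContinuousLinearMap.star_eq_adjoint, star_smul, star_one]
        rfl
      have hsx : sqrtA x = (starRingEnd ℂ) lam • sqrtA v - sqrtA (S v) := by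
        rw [hx, hLad]
        have hZv : sqrtA ((ContinuousLinearMap.adjoint Z) v) = sqrtA (S v) := by
          have h2 := ContinuousLinearMap.ext_iff.1 hZad v
          simpa using h2
        simp [map_sub, map_smul, hZv]
      have hlow : (‖lam‖ - cS) * ‖sqrtA v‖ ≤ ‖sqrtA x‖ := by
        rw [hsx]
        have h1 : ‖(starRingEnd ℂ) lam • sqrtA v‖ - ‖sqrtA (S v)‖ ≤
            ‖(starRingEnd ℂ) lam • sqrtA v - sqrtA (S v)‖ := norm_sub_norm_le _ _
        have h2 : ‖(starRingEnd ℂ) lam • sqrtA v‖ = ‖lam‖ * ‖sqrtA v‖ := by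
          rw [norm_smul]; simp
        have h3 : ‖sqrtA (S v)‖ ≤ cS * ‖sqrtA v‖ := by
          have := hcSm.2 v
          rwa [han, han] at this
        nlinarith [norm_nonneg (sqrtA v)]
      have hfin : ‖sqrtA v‖ ≤ (‖lam‖ - cS)⁻¹ * ‖sqrtA x‖ := by
        calc ‖sqrtA v‖ = (‖lam‖ - cS)⁻¹ * ((‖lam‖ - cS) * ‖sqrtA v‖) :=
              (inv_mul_cancel_left₀ (ne_of_gt hlamS) _).symm
          _ ≤ (‖lam‖ - cS)⁻¹ * ‖sqrtA x‖ :=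
              mul_le_mul_of_nonneg_left hlow (inv_nonneg.mpr (le_of_lt hlamS))
      simpa [hv] using hfin
    obtain ⟨V, hVc, hVn⟩ := exists_comp_eq sqrtA (sqrtA.comp (ContinuousLinearMap.adjoint R))
      ((‖lam‖ - cS)⁻¹) (inv_nonneg.mpr (le_of_lt hlamS)) hbR
    set S' : H →L[ℂ] H := ContinuousLinearMap.adjoint V with hS'
    have hS'c : sqrtA.comp S' = R.comp sqrtA := by
      have h1 := congrArg ContinuousLinearMap.adjoint hVc
      rw [ContinuousLinearMap.adjoint_comp, ContinuousLinearMap.adjoint_comp, hsa,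
        ContinuousLinearMap.adjoint_adjoint] at h1
      exact h1
    set T' : H →L[ℂ] H := lam • (1 : H →L[ℂ] H) - T with hT'
    have hsT' : sqrtA.comp T' = L.comp sqrtA := by
      ext x
      have hZx := ContinuousLinearMap.ext_iff.1 hZc x
      simp only [ContinuousLinearMap.comp_apply] at hZx ⊢
      simp [hT', hL, map_sub, map_smul, hZx]
    -- pointwise identities
    have hpt1 : ∀ x, sqrtA (T' (S' x)) = sqrtA x := by
      intro x
      have h1 : sqrtA (T' (S' x)) = L (sqrtA (S' x)) :=
        ContinuousLinearMap.ext_iff.1 hsT' (S' x)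
      have h2 : sqrtA (S' x) = R (sqrtA x) := ContinuousLinearMap.ext_iff.1 hS'c x
      have h3 : L (R (sqrtA x)) = sqrtA x := by
        have := ContinuousLinearMap.ext_iff.1 hLR (sqrtA x)
        simpa using this
      rw [h1, h2, h3]
    have hpt2 : ∀ x, sqrtA (S' (T' x)) = sqrtA x := by
      intro x
      have h2 : sqrtA (S' (T' x)) = R (sqrtA (T' x)) := ContinuousLinearMap.ext_iff.1 hS'c (T' x)
      have h1 : sqrtA (T' x) = L (sqrtA x) := ContinuousLinearMap.ext_iff.1 hsT' x
      have h3 : R (L (sqrtA x)) = sqrtA x := by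
        have := ContinuousLinearMap.ext_iff.1 hRL (sqrtA x)
        simpa using this
      rw [h2, h1, h3]
    have hAform : ∀ y, A y = sqrtA (sqrtA y) := by
      intro y
      rw [← hsq]; rfl
    have heq1 : A.comp (T'.comp S') = A := by
      ext x
      simp only [ContinuousLinearMap.comp_apply]
      rw [hAform, hpt1, ← hAform]
    have heq2 : A.comp (S'.comp T') = A := by
      ext x
      simp only [ContinuousLinearMap.comp_apply]
      rw [hAform, hpt2, ← hAform]
    have hS'ne : S' ≠ 0 := by
      intro hcon
      apply hA0
      ext x
      have h2 : sqrtA (S' x) = R (sqrtA x) := ContinuousLinearMap.ext_iff.1 hS'c x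
      rw [hcon] at h2
      simp only [ContinuousLinearMap.zero_apply, map_zero] at h2
      have h3 : L (R (sqrtA x)) = sqrtA x := by
        have := ContinuousLinearMap.ext_iff.1 hLR (sqrtA x)
        simpa using this
      have h4 : sqrtA x = 0 := by rw [← h3, ← h2, map_zero]
      rw [hAform, h4, map_zero]
      simp
    have hT'ne : T' ≠ 0 := by
      intro hcon
      apply hA0
      rw [← heq1, hcon]
      ext x; simp
    have hS'mem : MemBA A S' := by
      refine ⟨‖R‖ + 1, by positivity, fun x => ?_⟩
      have h2 : sqrtA (S' x) = R (sqrtA x) := ContinuousLinearMap.ext_iff.1 hS'c x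
      rw [han, han, h2]
      calc ‖R (sqrtA x)‖ ≤ ‖R‖ * ‖sqrtA x‖ := R.le_opNorm _
        _ ≤ (‖R‖ + 1) * ‖sqrtA x‖ := by nlinarith [norm_nonneg (sqrtA x)]
    exact ⟨hT'ne, S', hS'ne, hS'mem, heq1, heq2⟩
  constructor
  · intro lam hmem
    by_contra hcon
    push_neg at hcon
    exact hmem (key lam hcon)
  · apply Metric.isBounded_closedBall
      (x := (0 : ℂ)) (r := max (opANorm A T) (opANorm A S)) |>.subset
    intro z hz
    rw [Metric.mem_closedBall, dist_zero_right]
    by_contra hcon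
    push_neg at hcon
    exact hz (key z hcon)
end

section
/- Let T ∈ B_{A^{1/2}}(H) be A-invertible in B_{A^{1/2}}(H) with A-inverse S ∈ B_{A^{1/2}}(H), and let T' ∈ B_{A^{1/2}}(H). Let W ∈ B_{A^{1/2}}(H) be the A^{1/2}-adjoint (T'S)^⋄ of T'S. If ‖T'S‖_A < 1 and ‖W‖_A < 1, then T + T' is A-invertible in B_{A^{1/2}}(H). -/
variable {H : Type*} [NormedAddCommGroup H] [InnerProductSpace ℂ H] [CompleteSpace H]

set_option maxHeartbeats 1000000 in
set_option synthInstance.maxHeartbeats 1000000 in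
theorem stmt12 (A sqrtA T S T' W : H →L[ℂ] H) (hA : A.IsPositive) (hA0 : A ≠ 0)
    (hsqrt : sqrtA.IsPositive) (hsq : sqrtA.comp sqrtA = A)
    (hT : MemBA A T) (hT0 : T ≠ 0) (hSmem : MemBA A S) (hS0 : S ≠ 0)
    (hTS : A.comp (T.comp S) = A) (hST : A.comp (S.comp T) = A)
    (hT' : MemBA A T') (hWmem : MemBA A W) (hW : IsDiamond sqrtA (T'.comp S) W)
    (h1 : opANorm A (T'.comp S) < 1) (h2 : opANorm A W < 1) :
    AInv A (T + T') := by
  classical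
  set Q : H →L[ℂ] H := T'.comp S with hQdef
  -- basic facts about sqrtA
  have hsa : ContinuousLinearMap.adjoint sqrtA = sqrtA := hsqrt.isSelfAdjoint.adjoint_eq
  have hsym : ∀ x y : H, (inner ℂ (sqrtA x) y : ℂ) = inner ℂ x (sqrtA y) :=
    fun x y => hsqrt.1 x y
  have hApt : ∀ x : H, A x = sqrtA (sqrtA x) :=
    fun x => (ContinuousLinearMap.ext_iff.mp hsq x).symm
  have hanorm : ∀ x : H, anorm A x = ‖sqrtA x‖ := by
    intro x
    unfold anorm
    rw [hApt x, hsym (sqrtA x) x, inner_self_eq_norm_sq, Real.sqrt_sq (norm_nonneg _)]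
  have hAz0 : ∀ z : H, A z = 0 → sqrtA z = 0 := by
    intro z hz
    have h0 : ‖sqrtA z‖ = 0 := by
      rw [← hanorm]
      unfold anorm
      rw [hz, inner_zero_left]
      simp
    exact norm_eq_zero.mp h0
  have hZ : ∀ (R : H →L[ℂ] H), MemBA A R → ∀ z : H, sqrtA z = 0 → sqrtA (R z) = 0 := by
    intro R hR z hz
    obtain ⟨c, hc0, hb⟩ := hR
    have := hb z
    rw [hanorm, hanorm, hz, norm_zero, mul_zero] at this
    exact norm_le_zero_iff.mp this
  -- extract constants < 1
  have hQmem : MemBA A Q := by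
    obtain ⟨c1, hc1, hb1⟩ := hT'
    obtain ⟨c2, hc2, hb2⟩ := hSmem
    refine ⟨c1 * c2, mul_pos hc1 hc2, fun x => ?_⟩
    calc anorm A (Q x) = anorm A (T' (S x)) := rfl
      _ ≤ c1 * anorm A (S x) := hb1 _
      _ ≤ c1 * (c2 * anorm A x) := by
          exact mul_le_mul_of_nonneg_left (hb2 x) (le_of_lt hc1)
      _ = c1 * c2 * anorm A x := by ring
  have hQset : ∃ c, (0 ≤ c ∧ ∀ x : H, anorm A (Q x) ≤ c * anorm A x) ∧ c < 1 := by
    obtain ⟨c, hc, hb⟩ := hQmem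
    have hne : Set.Nonempty {c : ℝ | 0 ≤ c ∧ ∀ x : H, anorm A (Q x) ≤ c * anorm A x} :=
      ⟨c, le_of_lt hc, hb⟩
    obtain ⟨a, ha, halt⟩ := exists_lt_of_csInf_lt hne h1
    exact ⟨a, ha, halt⟩
  obtain ⟨kQ, ⟨hkQ0, hkQb⟩, hkQ1⟩ := hQset
  have hWset : ∃ c, (0 ≤ c ∧ ∀ x : H, anorm A (W x) ≤ c * anorm A x) ∧ c < 1 := by
    obtain ⟨c, hc, hb⟩ := hWmem
    have hne : Set.Nonempty {c : ℝ | 0 ≤ c ∧ ∀ x : H, anorm A (W x) ≤ c * anorm A x} :=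
      ⟨c, le_of_lt hc, hb⟩
    obtain ⟨a, ha, halt⟩ := exists_lt_of_csInf_lt hne h2
    exact ⟨a, ha, halt⟩
  obtain ⟨kW, ⟨hkW0, hkWb⟩, hkW1⟩ := hWset
  -- the space K
  set K : Submodule ℂ H := (LinearMap.range (sqrtA : H →ₗ[ℂ] H)).topologicalClosure with hKdef
  haveI : CompleteSpace K := (Submodule.isClosed_topologicalClosure _).completeSpace_coe
  set P : H →L[ℂ] K := K.orthogonalProjectionOnto with hPdef
  have hmemK : ∀ x : H, sqrtA x ∈ K :=
    fun x => Submodule.le_topologicalClosure _ (LinearMap.mem_range_self _ x)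
  have hKset : (K : Set H) = closure (Set.range ⇑sqrtA) := by
    rw [hKdef, Submodule.topologicalClosure_coe]
    congr 1
  have hkc : ∀ k : K, (k : H) ∈ closure (Set.range ⇑sqrtA) := by
    intro k
    rw [← hKset]
    exact k.2
  have hWrange : ∀ y : H, W y ∈ K := by
    intro y
    rw [← SetLike.mem_coe, hKset]
    exact hW.2 ⟨y, rfl⟩
  have hPι : ∀ k : K, P (k : H) = k := fun k => K.orthogonalProjectionOnto_mem_subspace_eq_self k
  have hPsq : ∀ x : H, ((P (sqrtA x) : H)) = sqrtA x :=
    fun x => K.starProjection_eq_self_iff.mpr (hmemK x)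
  -- sqrtA kills the orthogonal complement
  have hkillA : ∀ v : H, v ∈ Kᗮ → sqrtA v = 0 := by
    intro v hv
    have h0 : (inner ℂ (sqrtA v) (sqrtA v) : ℂ) = 0 := by
      rw [hsym v (sqrtA v)]
      exact (Submodule.mem_orthogonal' K v).mp hv _ (hmemK (sqrtA v))
    exact inner_self_eq_zero.mp h0
  have hF3 : ∀ h : H, sqrtA ((P h : H)) = sqrtA h := by
    intro h
    have h1' : sqrtA (h - (P h : H)) = 0 := hkillA _ (K.sub_starProjection_mem_orthogonal h)
    rw [map_sub, sub_eq_zero] at h1'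
    exact h1'.symm
  -- adjoint of W
  set Wad : H →L[ℂ] H := ContinuousLinearMap.adjoint W with hWaddef
  have hWadsq : ∀ x : H, Wad (sqrtA x) = sqrtA (Q x) := by
    intro x
    have h := congrArg ContinuousLinearMap.adjoint hW.1
    rw [ContinuousLinearMap.adjoint_comp, ContinuousLinearMap.adjoint_comp, hsa,
      ContinuousLinearMap.adjoint_adjoint] at h
    exact ContinuousLinearMap.ext_iff.mp h x
  have hWadkill : ∀ v : H, v ∈ Kᗮ → Wad v = 0 := by
    intro v hv
    have h0 : (inner ℂ (Wad v) (Wad v) : ℂ) = 0 := by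
      rw [ContinuousLinearMap.adjoint_inner_left]
      exact (Submodule.mem_orthogonal' K v).mp hv _ (hWrange (Wad v))
    exact inner_self_eq_zero.mp h0
  have hWadP : ∀ h : H, Wad ((P h : H)) = Wad h := by
    intro h
    have h1' : Wad (h - (P h : H)) = 0 := hWadkill _ (K.sub_starProjection_mem_orthogonal h)
    rw [map_sub, sub_eq_zero] at h1'
    exact h1'.symm
  -- sigma, M, N
  set σ : H →L[ℂ] K := P.comp sqrtA with hσdef
  have hισ : ∀ x : H, ((σ x : H)) = sqrtA x := fun x => hPsq x
  have hσnorm : ∀ x : H, ‖σ x‖ = anorm A x := by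
    intro x
    rw [hanorm, ← hισ x]
    rfl
  set M : K →L[ℂ] K := P.comp (Wad.comp K.subtypeL) with hMdef
  set N : K →L[ℂ] K := P.comp (Q.comp K.subtypeL) with hNdef
  set N' : K →L[ℂ] K := P.comp ((ContinuousLinearMap.adjoint Q).comp K.subtypeL) with hN'def
  have hMσ : ∀ x : H, M (σ x) = σ (Q x) := by
    intro x
    show P (Wad ((σ x : H))) = P (sqrtA (Q x))
    rw [hισ x, hWadsq x]
  have hQad : ∀ x : H, (ContinuousLinearMap.adjoint Q) (sqrtA x) = sqrtA (W x) :=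
    fun x => (ContinuousLinearMap.ext_iff.mp hW.1 x).symm
  have hN'σ : ∀ x : H, N' (σ x) = σ (W x) := by
    intro x
    show P ((ContinuousLinearMap.adjoint Q) ((σ x : H))) = P (sqrtA (W x))
    rw [hισ x, hQad x]
  -- density argument
  have hdense : ∀ (C : K →L[ℂ] K) (c : ℝ), 0 ≤ c →
      (∀ x : H, ‖C (σ x)‖ ≤ c * ‖σ x‖) → ∀ k : K, ‖C k‖ ≤ c * ‖k‖ := by
    intro C c hc hb k
    obtain ⟨u, hu1, hu2⟩ := mem_closure_iff_seq_limit.mp (hkc k)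
    choose xs hxs using hu1
    have hconv : Filter.Tendsto (fun n => σ (xs n)) Filter.atTop (nhds k) := by
      rw [tendsto_subtype_rng]
      have he : (fun n => ((σ (xs n) : H))) = u := by
        funext n
        rw [hισ (xs n), hxs n]
      rw [he]
      exact hu2
    have t1 : Filter.Tendsto (fun n => ‖C (σ (xs n))‖) Filter.atTop (nhds ‖C k‖) :=
      ((C.continuous.tendsto k).comp hconv).norm
    have t2 : Filter.Tendsto (fun n => c * ‖σ (xs n)‖) Filter.atTop (nhds (c * ‖k‖)) :=
      hconv.norm.const_mul c
    exact le_of_tendsto_of_tendsto' t1 t2 fun n => hb (xs n)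
  -- norm bounds
  have hMb : ∀ k : K, ‖M k‖ ≤ kQ * ‖k‖ := by
    refine hdense M kQ hkQ0 fun x => ?_
    rw [hMσ x, hσnorm, hσnorm]
    exact hkQb x
  have hN'b : ∀ k : K, ‖N' k‖ ≤ kW * ‖k‖ := by
    refine hdense N' kW hkW0 fun x => ?_
    rw [hN'σ x, hσnorm, hσnorm]
    exact hkWb x
  -- inner ℂ product relation between N and N'
  have hPinner : ∀ (h : H) (u : K), (inner ℂ ((P h : H)) ((u : H)) : ℂ) = inner ℂ h (u : H) := by
    intro h u
    have hv : h - (P h : H) ∈ Kᗮ := K.sub_starProjection_mem_orthogonal h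
    have h0 : (inner ℂ ((u : H)) (h - (P h : H)) : ℂ) = 0 :=
      (Submodule.mem_orthogonal K _).mp hv _ u.2
    have h0' : (inner ℂ (h - (P h : H)) ((u : H)) : ℂ) = 0 := inner_eq_zero_symm.mp h0
    rw [inner_sub_left, sub_eq_zero] at h0'
    exact h0'.symm
  have hPinner' : ∀ (h : H) (u : K), (inner ℂ ((u : H)) ((P h : H)) : ℂ) = inner ℂ (u : H) h := by
    intro h u
    have hv : h - (P h : H) ∈ Kᗮ := K.sub_starProjection_mem_orthogonal h
    have h0 : (inner ℂ ((u : H)) (h - (P h : H)) : ℂ) = 0 :=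
      (Submodule.mem_orthogonal K _).mp hv _ u.2
    rw [inner_sub_right, sub_eq_zero] at h0
    exact h0.symm
  have hNadj : ∀ k k' : K, (inner ℂ (N k) k' : ℂ) = inner ℂ k (N' k') := by
    intro k k'
    rw [Submodule.coe_inner, Submodule.coe_inner]
    show (inner ℂ ((P (Q (k : H)) : H)) ((k' : H)) : ℂ)
      = inner ℂ ((k : H)) ((P ((ContinuousLinearMap.adjoint Q) (k' : H)) : H))
    rw [hPinner, hPinner']
    exact (ContinuousLinearMap.adjoint_inner_right Q (k : H) (k' : H)).symm
  have hNb : ∀ k : K, ‖N k‖ ≤ kW * ‖k‖ := by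
    intro k
    rcases eq_or_ne ‖N k‖ 0 with h0 | h0
    · rw [h0]
      exact mul_nonneg hkW0 (norm_nonneg _)
    · have hpos : 0 < ‖N k‖ := lt_of_le_of_ne (norm_nonneg _) (Ne.symm h0)
      have e1 : ‖N k‖ ^ 2 = RCLike.re (inner ℂ (N k) (N k) : ℂ) := (inner_self_eq_norm_sq _).symm
      have e2 : RCLike.re (inner ℂ (N k) (N k) : ℂ) = RCLike.re (inner ℂ k (N' (N k)) : ℂ) := by
        rw [hNadj]
      have e3 : RCLike.re (inner ℂ k (N' (N k)) : ℂ) ≤ ‖(inner ℂ k (N' (N k)) : ℂ)‖ :=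
        RCLike.re_le_norm _
      have e4 : ‖(inner ℂ k (N' (N k)) : ℂ)‖ ≤ ‖k‖ * ‖N' (N k)‖ := norm_inner_le_norm _ _
      have e5 : ‖N' (N k)‖ ≤ kW * ‖N k‖ := hN'b (N k)
      have e6 : ‖N k‖ ^ 2 ≤ ‖k‖ * (kW * ‖N k‖) := by
        calc ‖N k‖ ^ 2 = RCLike.re (inner ℂ (N k) (N k) : ℂ) := e1
          _ = RCLike.re (inner ℂ k (N' (N k)) : ℂ) := e2
          _ ≤ ‖(inner ℂ k (N' (N k)) : ℂ)‖ := e3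
          _ ≤ ‖k‖ * ‖N' (N k)‖ := e4
          _ ≤ ‖k‖ * (kW * ‖N k‖) := by
              exact mul_le_mul_of_nonneg_left e5 (norm_nonneg _)
      nlinarith [hpos]
  have hMlt : ‖M‖ < 1 := lt_of_le_of_lt (M.opNorm_le_bound hkQ0 hMb) hkQ1
  have hNlt : ‖N‖ < 1 := lt_of_le_of_lt (N.opNorm_le_bound hkW0 hNb) hkW1
  -- invertibility of 1 + M and 1 + N
  have hMlt' : ‖-M‖ < 1 := lt_of_le_of_lt (le_of_eq (norm_neg M)) hMlt
  have hNlt' : ‖-N‖ < 1 := lt_of_le_of_lt (le_of_eq (norm_neg N)) hNlt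
  have hMinv : ∃ E : K →L[ℂ] K, E * (1 + M) = 1 ∧ (1 + M) * E = 1 := by
    let u : (K →L[ℂ] K)ˣ := Units.oneSub (-M) hMlt'
    have hu : (u : K →L[ℂ] K) = 1 + M := sub_neg_eq_add 1 M
    exact ⟨((u⁻¹ : (K →L[ℂ] K)ˣ) : K →L[ℂ] K), by rw [← hu]; exact u.inv_mul,
      by rw [← hu]; exact u.mul_inv⟩
  have hNinv : ∃ E : K →L[ℂ] K, E * (1 + N) = 1 ∧ (1 + N) * E = 1 := by
    let u : (K →L[ℂ] K)ˣ := Units.oneSub (-N) hNlt'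
    have hu : (u : K →L[ℂ] K) = 1 + N := sub_neg_eq_add 1 N
    exact ⟨((u⁻¹ : (K →L[ℂ] K)ˣ) : K →L[ℂ] K), by rw [← hu]; exact u.inv_mul,
      by rw [← hu]; exact u.mul_inv⟩
  obtain ⟨EK, hEK1, hEK2⟩ := hMinv
  obtain ⟨FN, hFN1, hFN2⟩ := hNinv
  set GK : K →L[ℂ] K := FN * N with hGKdef
  -- Ahat
  set Ahat : K →L[ℂ] K := σ.comp K.subtypeL with hAhatdef
  have hAhatapp : ∀ k : K, Ahat k = σ (k : H) := fun k => rfl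
  have hAhatP : ∀ h : H, Ahat (P h) = σ h := by
    intro h
    show P (sqrtA ((P h : H))) = P (sqrtA h)
    rw [hF3 h]
  have hAhatN : Ahat * N = M * Ahat := by
    ext k
    have l1 : Ahat (N k) = σ (Q (k : H)) := by
      show P (sqrtA ((P (Q (k : H)) : H))) = σ (Q (k : H))
      rw [hF3]
      rfl
    have l2 : M (Ahat k) = σ (Q (k : H)) := by rw [hAhatapp, hMσ ((k : H))]
    simp only [ContinuousLinearMap.mul_apply, l1, l2]
  have h5 : Ahat * (1 + N) = (1 + M) * Ahat := by
    rw [mul_add, add_mul, mul_one, one_mul, hAhatN]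
  have hAF : Ahat * FN = EK * Ahat := by
    calc Ahat * FN = (EK * (1 + M)) * (Ahat * FN) := by rw [hEK1, one_mul]
      _ = EK * (((1 + M) * Ahat) * FN) := by
          rw [mul_assoc, ← mul_assoc (1 + M) Ahat FN]
      _ = EK * ((Ahat * (1 + N)) * FN) := by rw [h5]
      _ = EK * (Ahat * ((1 + N) * FN)) := by rw [mul_assoc Ahat]
      _ = EK * Ahat := by rw [hFN2, mul_one]
  have hAG : Ahat * GK = (EK * M) * Ahat := by
    calc Ahat * GK = (Ahat * FN) * N := by rw [hGKdef, mul_assoc]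
      _ = (EK * Ahat) * N := by rw [hAF]
      _ = EK * (Ahat * N) := by rw [mul_assoc]
      _ = EK * (M * Ahat) := by rw [hAhatN]
      _ = (EK * M) * Ahat := by rw [mul_assoc]
  have happ : ∀ v : K, EK v + EK (M v) = v := by
    intro v
    have h := congrArg (fun f : K →L[ℂ] K => f v) hEK1
    simpa only [ContinuousLinearMap.mul_apply, ContinuousLinearMap.add_apply,
      ContinuousLinearMap.one_apply, map_add] using h
  have happ2 : ∀ v : K, EK v + M (EK v) = v := by
    intro v
    have h := congrArg (fun f : K →L[ℂ] K => f v) hEK2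
    simpa only [ContinuousLinearMap.mul_apply, ContinuousLinearMap.add_apply,
      ContinuousLinearMap.one_apply] using h
  -- the operator V
  set V : H →L[ℂ] H := 1 - K.subtypeL.comp (GK.comp P) with hVdef
  have hVapp : ∀ x : H, V x = x - ((GK (P x) : H)) := fun x => rfl
  have hsqι : ∀ k : K, sqrtA ((k : H)) = ((Ahat k : H)) := by
    intro k
    rw [hAhatapp, hισ ((k : H))]
  have hsqV : ∀ x : H, sqrtA (V x) = ((EK (σ x) : H)) := by
    intro x
    rw [hVapp, map_sub, hsqι (GK (P x))]
    have l1 : Ahat (GK (P x)) = EK (M (σ x)) := by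
      have := congrArg (fun f : K →L[ℂ] K => f (P x)) hAG
      simp only [ContinuousLinearMap.mul_apply] at this
      rw [this, hAhatP]
    rw [l1]
    have l2 : σ x - EK (M (σ x)) = EK (σ x) := by
      rw [sub_eq_iff_eq_add]
      exact (happ (σ x)).symm
    rw [← hισ x]
    rw [← Submodule.coe_sub, l2]
  have hcond2 : ∀ x : H, sqrtA (V (x + Q x)) = sqrtA x := by
    intro x
    rw [hsqV]
    have l1 : σ (x + Q x) = σ x + M (σ x) := by
      rw [map_add, hMσ x]
    rw [l1]
    have l2 : EK (σ x + M (σ x)) = σ x := by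
      rw [map_add EK]
      exact happ (σ x)
    rw [l2, hισ x]
  have hsqQ2 : ∀ z : H, sqrtA (Q z) = ((M (σ z) : H)) := by
    intro z
    rw [hMσ z, hισ (Q z)]
  have hcond1 : ∀ x : H, sqrtA (V x + Q (V x)) = sqrtA x := by
    intro x
    rw [map_add, hsqV, hsqQ2 (V x)]
    have l1 : σ (V x) = EK (σ x) := by
      show P (sqrtA (V x)) = EK (σ x)
      rw [hsqV x, hPι]
    rw [l1]
    rw [← Submodule.coe_add, happ2 (σ x), hισ x]
  -- V is in B_{A^{1/2}}
  have hVmem : MemBA A V := by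
    refine ⟨‖EK‖ + 1, by positivity, fun x => ?_⟩
    rw [hanorm, hanorm, hsqV]
    have l1 : ‖((EK (σ x) : H))‖ = ‖EK (σ x)‖ := rfl
    rw [l1]
    calc ‖EK (σ x)‖ ≤ ‖EK‖ * ‖σ x‖ := EK.le_opNorm _
      _ ≤ (‖EK‖ + 1) * ‖σ x‖ := by
          have := norm_nonneg (σ x)
          nlinarith [norm_nonneg EK]
      _ = (‖EK‖ + 1) * ‖sqrtA x‖ := by rw [hσnorm, hanorm]
  -- pointwise facts from hTS, hST
  have hTSpt : ∀ y : H, sqrtA (T (S y)) = sqrtA y := by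
    intro y
    have h := ContinuousLinearMap.ext_iff.mp hTS y
    simp only [ContinuousLinearMap.comp_apply] at h
    have hz : A (T (S y) - y) = 0 := by rw [map_sub, h, sub_self]
    have := hAz0 _ hz
    rw [map_sub, sub_eq_zero] at this
    exact this
  have hSTpt : ∀ y : H, sqrtA (S (T y)) = sqrtA y := by
    intro y
    have h := ContinuousLinearMap.ext_iff.mp hST y
    simp only [ContinuousLinearMap.comp_apply] at h
    have hz : A (S (T y) - y) = 0 := by rw [map_sub, h, sub_self]
    have := hAz0 _ hz
    rw [map_sub, sub_eq_zero] at this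
    exact this
  -- the A-inverse
  have hE1 : A.comp ((T + T').comp (S.comp V)) = A := by
    ext x
    simp only [ContinuousLinearMap.comp_apply, ContinuousLinearMap.add_apply]
    have hs : sqrtA (T (S (V x)) + T' (S (V x))) = sqrtA x := by
      calc sqrtA (T (S (V x)) + T' (S (V x)))
          = sqrtA (T (S (V x))) + sqrtA (T' (S (V x))) := map_add _ _ _
        _ = sqrtA (V x) + sqrtA (Q (V x)) := by rw [hTSpt (V x)]; rfl
        _ = sqrtA (V x + Q (V x)) := (map_add _ _ _).symm
        _ = sqrtA x := hcond1 x
    rw [hApt, hApt x, hs]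
  have hE2 : A.comp ((S.comp V).comp (T + T')) = A := by
    ext x
    simp only [ContinuousLinearMap.comp_apply, ContinuousLinearMap.add_apply]
    have ha : sqrtA (T' x) = sqrtA (Q (T x)) := by
      have h0 : sqrtA (S (T x) - x) = 0 := by rw [map_sub, hSTpt x, sub_self]
      have h1' := hZ T' hT' _ h0
      rw [map_sub, map_sub, sub_eq_zero] at h1'
      exact h1'.symm
    have hb : sqrtA (T x + T' x - (T x + Q (T x))) = 0 := by
      have : T x + T' x - (T x + Q (T x)) = T' x - Q (T x) := by abel
      rw [this, map_sub, ha, sub_self]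
    have hc : sqrtA (V (T x + T' x) - V (T x + Q (T x))) = 0 := by
      rw [← map_sub]
      exact hZ V hVmem _ hb
    have hd : sqrtA (S (V (T x + T' x)) - S (V (T x + Q (T x)))) = 0 := by
      rw [← map_sub]
      exact hZ S hSmem _ hc
    have he : sqrtA (V (T x + Q (T x)) - T x) = 0 := by
      rw [map_sub, hcond2 (T x), sub_self]
    have hf : sqrtA (S (V (T x + Q (T x)))) = sqrtA (S (T x)) := by
      have := hZ S hSmem _ he
      rw [map_sub, map_sub, sub_eq_zero] at this
      exact this
    have hs : sqrtA (S (V (T x + T' x))) = sqrtA x := by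
      rw [map_sub, sub_eq_zero] at hd
      rw [hd, hf, hSTpt x]
    rw [hApt, hApt x, hs]
  -- S ∘ V is in B_{A^{1/2}}
  have hSVmem : MemBA A (S.comp V) := by
    obtain ⟨c1, hc1, hb1⟩ := hSmem
    obtain ⟨c2, hc2, hb2⟩ := hVmem
    refine ⟨c1 * c2, mul_pos hc1 hc2, fun x => ?_⟩
    calc anorm A (S (V x)) ≤ c1 * anorm A (V x) := hb1 _
      _ ≤ c1 * (c2 * anorm A x) := mul_le_mul_of_nonneg_left (hb2 x) (le_of_lt hc1)
      _ = c1 * c2 * anorm A x := by ring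
  refine ⟨?_, S.comp V, ?_, hSVmem, hE1, hE2⟩
  · intro h0
    apply hA0
    rw [h0] at hE1
    rw [ContinuousLinearMap.zero_comp, ContinuousLinearMap.comp_zero] at hE1
    exact hE1.symm
  · intro h0
    apply hA0
    rw [h0] at hE1
    rw [ContinuousLinearMap.comp_zero, ContinuousLinearMap.comp_zero] at hE1
    exact hE1.symm
end

section
/- Let T ∈ B_{A^{1/2}}(H). Then ρ_A(T) is an open subset of ℂ, and there exists a function R from ℂ to the bounded operators on H which is analytic on ρ_A(T) (with respect to the operator norm) and such that for every λ ∈ ρ_A(T), R(λ) ∈ B_{A^{1/2}}(H) and A(λI − T)R(λ) = A·R(λ)(λI − T) = A (so R(λ) is an A-inverse of λI − T). -/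
variable {H : Type*} [NormedAddCommGroup H] [InnerProductSpace ℂ H] [CompleteSpace H]

/-! ### Auxiliary lemmas -/

section Aux

set_option maxHeartbeats 1000000 in
/-- A positive operator has a square root `f` with `anorm A x = ‖f x‖`. -/
lemma exists_sqrtf (A : H →L[ℂ] H) (hA : A.IsPositive) :
    ∃ f : H →L[ℂ] H, A = f * f ∧ (∀ x : H, anorm A x = ‖f x‖) ∧
      (∀ x : H, A x = 0 ↔ f x = 0) := by
  have h0 : (0 : H →L[ℂ] H) ≤ A := (ContinuousLinearMap.nonneg_iff_isPositive A).2 hA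
  have hsa : IsSelfAdjoint (CFC.sqrt A) :=
    ((ContinuousLinearMap.nonneg_iff_isPositive _).1 (CFC.sqrt_nonneg _)).isSelfAdjoint
  have hmul : CFC.sqrt A * CFC.sqrt A = A := CFC.sqrt_mul_sqrt_self A h0
  have happ : ∀ x : H, CFC.sqrt A (CFC.sqrt A x) = A x := by
    intro x
    conv_rhs => rw [← hmul]
    rfl
  have hnorm : ∀ x : H, anorm A x = ‖CFC.sqrt A x‖ := by
    intro x
    have h2 : (inner ℂ (A x) x : ℂ) = inner ℂ (CFC.sqrt A x) (CFC.sqrt A x) := by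
      rw [← happ x]
      nth_rewrite 1 [← hsa.adjoint_eq]
      exact ContinuousLinearMap.adjoint_inner_left (CFC.sqrt A) x (CFC.sqrt A x)
    unfold anorm
    rw [h2, inner_self_eq_norm_sq]
    exact Real.sqrt_sq (norm_nonneg _)
  refine ⟨CFC.sqrt A, hmul.symm, hnorm, fun x => ⟨?_, ?_⟩⟩
  · intro hx
    have h1 := hnorm x
    unfold anorm at h1
    rw [hx] at h1
    simp only [inner_zero_left, map_zero, Real.sqrt_zero] at h1
    exact norm_eq_zero.1 h1.symm
  · intro hx
    rw [← happ x, hx, map_zero]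

/-- If `S ∈ B_{A^{1/2}}`, then `S` preserves the kernel of `f` (where `anorm A x = ‖f x‖`). -/
lemma memBA_ker {A f S : H →L[ℂ] H} (hnorm : ∀ x : H, anorm A x = ‖f x‖)
    (hS : MemBA A S) : ∀ x : H, f x = 0 → f (S x) = 0 := by
  obtain ⟨c, _, hc⟩ := hS
  intro x hx
  have h1 : ‖f (S x)‖ ≤ c * ‖f x‖ := by rw [← hnorm, ← hnorm]; exact hc x
  rw [hx, norm_zero, mul_zero] at h1
  exact norm_le_zero_iff.1 h1

/-- Iterated bound for powers. -/
lemma pow_bound {f S : H →L[ℂ] H} {c : ℝ}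
    (h : ∀ x : H, ‖f (S x)‖ ≤ c * ‖f x‖) (hc : 0 ≤ c) :
    ∀ (n : ℕ) (x : H), ‖f ((S ^ n) x)‖ ≤ c ^ n * ‖f x‖ := by
  intro n
  induction n with
  | zero => intro x; simp
  | succ n ih =>
    intro x
    have h1 : (S ^ (n + 1)) x = (S ^ n) (S x) := by
      rw [pow_succ]; rfl
    rw [h1]
    calc ‖f ((S ^ n) (S x))‖ ≤ c ^ n * ‖f (S x)‖ := ih (S x)
      _ ≤ c ^ n * (c * ‖f x‖) := by
          exact mul_le_mul_of_nonneg_left (h x) (pow_nonneg hc n)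
      _ = c ^ (n + 1) * ‖f x‖ := by ring

lemma orth_subset_ker {A : H →L[ℂ] H} (hsa : IsSelfAdjoint A) {v : H}
    (hv : v ∈ ((LinearMap.range (A : H →ₗ[ℂ] H)).topologicalClosure)ᗮ) : A v = 0 := by
  have hmem : A (A v) ∈ (LinearMap.range (A : H →ₗ[ℂ] H)).topologicalClosure :=
    Submodule.le_topologicalClosure _ ⟨A v, rfl⟩
  have h0 : (inner ℂ (A (A v)) v : ℂ) = 0 :=
    (Submodule.mem_orthogonal _ v).1 hv _ hmem
  have h1 : (inner ℂ (A (A v)) v : ℂ) = inner ℂ (A v) (A v) := by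
    nth_rewrite 1 [← hsa.adjoint_eq]
    exact ContinuousLinearMap.adjoint_inner_left A v (A v)
  rw [h1] at h0
  exact inner_self_eq_zero.1 h0

lemma ker_subset_orth {A : H →L[ℂ] H} (hsa : IsSelfAdjoint A) {y : H}
    (hy : A y = 0) : y ∈ ((LinearMap.range (A : H →ₗ[ℂ] H)).topologicalClosure)ᗮ := by
  rw [Submodule.mem_orthogonal]
  intro u hu
  have hclosed : IsClosed {u : H | (inner ℂ u y : ℂ) = 0} :=
    isClosed_eq (continuous_id.inner continuous_const) continuous_const
  have hsub : (LinearMap.range (A : H →ₗ[ℂ] H) : Set H) ⊆ {u : H | (inner ℂ u y : ℂ) = 0} := by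
    rintro _ ⟨z, rfl⟩
    show (inner ℂ (A z) y : ℂ) = 0
    have : (inner ℂ (A z) y : ℂ) = inner ℂ z (A y) := by
      nth_rewrite 1 [← hsa.adjoint_eq]
      exact ContinuousLinearMap.adjoint_inner_left A y z
    rw [this, hy, inner_zero_right]
  exact closure_minimal hsub hclosed hu

lemma projA_ker {A : H →L[ℂ] H} (hsa : IsSelfAdjoint A) {y : H} (hy : A y = 0) :
    projA A y = 0 := by
  haveI : CompleteSpace ((LinearMap.range (A : H →ₗ[ℂ] H)).topologicalClosure : Submodule ℂ H) :=
    (Submodule.isClosed_topologicalClosure _).completeSpace_coe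
  have h0 : Submodule.orthogonalProjectionOnto (LinearMap.range (A : H →ₗ[ℂ] H)).topologicalClosure y = 0 :=
    Submodule.orthogonalProjectionOnto_eq_zero_iff.2 (ker_subset_orth hsa hy)
  show (((LinearMap.range (A : H →ₗ[ℂ] H)).topologicalClosure.subtypeL).comp
    (Submodule.orthogonalProjectionOnto (LinearMap.range (A : H →ₗ[ℂ] H)).topologicalClosure)) y = 0
  simp [h0]

lemma projA_fix {A : H →L[ℂ] H} (hsa : IsSelfAdjoint A) (y : H) :
    A (projA A y) = A y := by
  haveI : CompleteSpace ((LinearMap.range (A : H →ₗ[ℂ] H)).topologicalClosure : Submodule ℂ H) :=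
    (Submodule.isClosed_topologicalClosure _).completeSpace_coe
  have h1 : y - projA A y ∈ ((LinearMap.range (A : H →ₗ[ℂ] H)).topologicalClosure)ᗮ :=
    Submodule.sub_starProjection_mem_orthogonal y
  have h2 : A (y - projA A y) = 0 := orth_subset_ker hsa h1
  rw [map_sub, sub_eq_zero] at h2
  exact h2.symm

/-- Canonical uniqueness: `projA A ∘ S` is determined by the `A`-inverse identities. -/
lemma proj_mul_unique {A f B S S' : H →L[ℂ] H}
    (hsa : IsSelfAdjoint A) (hff : A = f * f) (hnorm : ∀ x : H, anorm A x = ‖f x‖)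
    (hAf : ∀ y : H, A y = 0 ↔ f y = 0)
    (hS : MemBA A S)
    (h2 : A * (S * B) = A) (h1' : A * (B * S') = A) :
    projA A * S = projA A * S' := by
  have hker := memBA_ker hnorm hS
  have key : ∀ x : H, A (S x) = A (S' x) := by
    intro x
    have e1 : A * S' = A * (S * (B * S')) := by
      calc A * S' = (A * (S * B)) * S' := by rw [h2]
        _ = A * (S * (B * S')) := by rw [mul_assoc, mul_assoc]
    have e1x : A (S' x) = A (S ((B * S') x)) := by
      have := congrArg (fun O : H →L[ℂ] H => O x) e1
      exact this
    have hz : A ((B * S') x - x) = 0 := by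
      have h := congrArg (fun O : H →L[ℂ] H => O x) h1'
      have h' : A ((B * S') x) = A x := h
      rw [map_sub, h', sub_self]
    have hfz : f ((B * S') x - x) = 0 := (hAf _).1 hz
    have hfSz : f (S ((B * S') x - x)) = 0 := hker _ hfz
    have hASz : A (S ((B * S') x - x)) = 0 := (hAf _).2 hfSz
    rw [map_sub, map_sub, sub_eq_zero] at hASz
    rw [e1x, hASz]
  ext x
  have hdiff : A (S x - S' x) = 0 := by rw [map_sub, key x, sub_self]
  have := projA_ker hsa hdiff
  rw [map_sub, sub_eq_zero] at this
  exact this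

end Aux

set_option maxHeartbeats 2000000 in
theorem stmt13 (A T : H →L[ℂ] H) (hA : A.IsPositive) (hA0 : A ≠ 0)
    (hT : MemBA A T) :
    IsOpen (rhoA A T) ∧
      ∃ R : ℂ → H →L[ℂ] H, AnalyticOnNhd ℂ R (rhoA A T) ∧
        ∀ lam ∈ rhoA A T, MemBA A (R lam) ∧
          A.comp ((lam • (1 : H →L[ℂ] H) - T).comp (R lam)) = A ∧
          A.comp ((R lam).comp (lam • (1 : H →L[ℂ] H) - T)) = A := by
  classical
  haveI : Nontrivial H := by
    rcases subsingleton_or_nontrivial H with hs | hn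
    · exact absurd (Subsingleton.elim A 0) hA0
    · exact hn
  obtain ⟨f, hff, hnorm, hAf⟩ := exists_sqrtf A hA
  have hsa : IsSelfAdjoint A := hA.isSelfAdjoint
  -- choice of A-inverses
  have hch : ∀ lam ∈ rhoA A T, ∃ S : H →L[ℂ] H, MemBA A S ∧
      A * ((lam • (1 : H →L[ℂ] H) - T) * S) = A ∧
      A * (S * (lam • (1 : H →L[ℂ] H) - T)) = A := by
    intro lam h
    obtain ⟨_, S, _, h2, h3, h4⟩ := h
    exact ⟨S, h2, h3, h4⟩
  set Sc : ℂ → (H →L[ℂ] H) := fun lam =>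
    if h : lam ∈ rhoA A T then (hch lam h).choose else 0 with hScdef
  have hScSpec : ∀ lam (h : lam ∈ rhoA A T), MemBA A (Sc lam) ∧
      A * ((lam • (1 : H →L[ℂ] H) - T) * Sc lam) = A ∧
      A * (Sc lam * (lam • (1 : H →L[ℂ] H) - T)) = A := by
    intro lam h
    simp only [hScdef, dif_pos h]
    exact (hch lam h).choose_spec
  set P : H →L[ℂ] H := projA A with hPdef
  set R : ℂ → (H →L[ℂ] H) := fun lam => P * Sc lam with hRdef
  -- main local statement
  have main : ∀ lam₀ ∈ rhoA A T, ∃ ε > 0,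
      Metric.ball lam₀ ε ⊆ rhoA A T ∧ AnalyticAt ℂ R lam₀ := by
    intro lam₀ h₀
    obtain ⟨hS₀mem, h1₀, h2₀⟩ := hScSpec lam₀ h₀
    set S₀ : H →L[ℂ] H := Sc lam₀
    set B₀ : H →L[ℂ] H := lam₀ • (1 : H →L[ℂ] H) - T
    obtain ⟨c₀, hc₀, hb₀'⟩ := hS₀mem
    have hb₀ : ∀ x : H, ‖f (S₀ x)‖ ≤ c₀ * ‖f x‖ := by
      intro x; rw [← hnorm, ← hnorm]; exact hb₀' x
    set ε : ℝ := min (‖S₀‖ + 1)⁻¹ (c₀ + 1)⁻¹ with hεdef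
    have hεpos : 0 < ε := by
      apply lt_min <;> positivity
    -- for each lam in the ball we produce the Neumann A-inverse
    have hloc : ∀ lam ∈ Metric.ball lam₀ ε,
        let μ := lam₀ - lam
        let Sl := Ring.inverse (1 - μ • S₀) * S₀
        MemBA A Sl ∧
        A * ((lam • (1 : H →L[ℂ] H) - T) * Sl) = A ∧
        A * (Sl * (lam • (1 : H →L[ℂ] H) - T)) = A := by
      intro lam hlam
      intro μ Sl
      have hμnorm : ‖μ‖ < ε := by
        have : dist lam lam₀ < ε := Metric.mem_ball.1 hlam
        rw [dist_eq_norm] at this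
        calc ‖μ‖ = ‖-(lam - lam₀)‖ := by show ‖lam₀ - lam‖ = _; rw [neg_sub]
          _ = ‖lam - lam₀‖ := norm_neg _
          _ < ε := this
      have hμS : ‖μ‖ * (‖S₀‖ + 1) < 1 := by
        have h1 : ‖μ‖ < (‖S₀‖ + 1)⁻¹ := lt_of_lt_of_le hμnorm (min_le_left _ _)
        have h2 : ‖μ‖ * (‖S₀‖ + 1) < (‖S₀‖ + 1)⁻¹ * (‖S₀‖ + 1) :=
          mul_lt_mul_of_pos_right h1 (by positivity)
        rwa [inv_mul_cancel₀ (by positivity)] at h2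
      have hμ1 : ‖μ • S₀‖ < 1 := by
        rw [norm_smul]
        calc ‖μ‖ * ‖S₀‖ ≤ ‖μ‖ * (‖S₀‖ + 1) := by
              apply mul_le_mul_of_nonneg_left (by linarith) (norm_nonneg _)
          _ < 1 := hμS
      have hμ2 : ‖μ‖ * c₀ < 1 := by
        have h1 : ‖μ‖ < (c₀ + 1)⁻¹ := lt_of_lt_of_le hμnorm (min_le_right _ _)
        have h2 : ‖μ‖ * (c₀ + 1) < (c₀ + 1)⁻¹ * (c₀ + 1) :=
          mul_lt_mul_of_pos_right h1 (by positivity)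
        rw [inv_mul_cancel₀ (by positivity)] at h2
        calc ‖μ‖ * c₀ ≤ ‖μ‖ * (c₀ + 1) := by
              apply mul_le_mul_of_nonneg_left (by linarith) (norm_nonneg _)
          _ < 1 := h2
      -- the operator in question
      have hB : lam • (1 : H →L[ℂ] H) - T = B₀ - μ • 1 := by
        show lam • (1 : H →L[ℂ] H) - T = (lam₀ • 1 - T) - (lam₀ - lam) • 1
        rw [sub_smul]; abel
      -- geometric series facts
      have hgeom : Summable (fun n : ℕ => (μ • S₀) ^ n) :=
        summable_geometric_of_norm_lt_one hμ1
      have hgsum : Summable (fun n : ℕ => μ ^ n • S₀ ^ (n + 1)) := by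
        apply (hgeom.mul_right S₀).congr
        intro n
        rw [smul_pow, smul_mul_assoc, ← pow_succ]
      have hSrep : Sl = ∑' n : ℕ, μ ^ n • S₀ ^ (n + 1) := by
        show Ring.inverse (1 - μ • S₀) * S₀ = _
        rw [← geom_series_eq_inverse _ hμ1, ← Summable.tsum_mul_right _ hgeom]
        congr 1
        funext n
        rw [smul_pow, smul_mul_assoc, ← pow_succ]
      -- summability of the telescoping sequence
      have hμS₀lt : ‖μ‖ * ‖S₀‖ < 1 := by rw [← norm_smul]; exact hμ1
      have hh : Summable (fun n : ℕ => μ ^ n • (A * S₀ ^ n)) := by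
        apply Summable.of_norm
        have hle : ∀ n : ℕ, ‖μ ^ n • (A * S₀ ^ n)‖ ≤ ‖A‖ * (‖μ‖ * ‖S₀‖) ^ n := by
          intro n
          rw [norm_smul, norm_pow]
          calc ‖μ‖ ^ n * ‖A * S₀ ^ n‖ ≤ ‖μ‖ ^ n * (‖A‖ * ‖S₀‖ ^ n) := by
                apply mul_le_mul_of_nonneg_left _ (by positivity)
                calc ‖A * S₀ ^ n‖ ≤ ‖A‖ * ‖S₀ ^ n‖ := norm_mul_le _ _
                  _ ≤ ‖A‖ * ‖S₀‖ ^ n := by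
                      apply mul_le_mul_of_nonneg_left (norm_pow_le _ _) (norm_nonneg _)
            _ = ‖A‖ * (‖μ‖ * ‖S₀‖) ^ n := by ring
        exact Summable.of_nonneg_of_le (fun n => norm_nonneg _) hle
          ((summable_geometric_of_lt_one (by positivity) hμS₀lt).mul_left _)
      have hh1 : Summable (fun n : ℕ => μ ^ (n + 1) • (A * S₀ ^ (n + 1))) :=
        (summable_nat_add_iff 1).2 hh
      have htel : ∑' n : ℕ, (μ ^ n • (A * S₀ ^ n) - μ ^ (n + 1) • (A * S₀ ^ (n + 1))) = A := by
        rw [Summable.tsum_sub hh hh1, Summable.tsum_eq_zero_add hh]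
        simp
      -- first identity: A * (Bμ * Sl) = A
      have hid1 : A * ((B₀ - μ • 1) * Sl) = A := by
        rw [hSrep, ← mul_assoc, ← Summable.tsum_mul_left _ hgsum]
        have hterm : ∀ n : ℕ, (A * (B₀ - μ • 1)) * (μ ^ n • S₀ ^ (n + 1)) =
            μ ^ n • (A * S₀ ^ n) - μ ^ (n + 1) • (A * S₀ ^ (n + 1)) := by
          intro n
          have hpow : A * B₀ * S₀ ^ (n + 1) = A * S₀ ^ n := by
            rw [pow_succ', ← mul_assoc, mul_assoc A B₀ S₀, h1₀]
          have hC : A * (B₀ - μ • 1) = A * B₀ - μ • A := by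
            rw [mul_sub, mul_smul_comm, mul_one]
          calc (A * (B₀ - μ • 1)) * (μ ^ n • S₀ ^ (n + 1))
              = μ ^ n • ((A * B₀ - μ • A) * S₀ ^ (n + 1)) := by
                rw [hC, mul_smul_comm]
            _ = μ ^ n • (A * B₀ * S₀ ^ (n + 1)) - μ ^ n • (μ • (A * S₀ ^ (n + 1))) := by
                rw [sub_mul, smul_mul_assoc, smul_sub, mul_assoc]
            _ = μ ^ n • (A * S₀ ^ n) - μ ^ (n + 1) • (A * S₀ ^ (n + 1)) := by
                rw [hpow, smul_smul, ← pow_succ]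
        calc (∑' n : ℕ, (A * (B₀ - μ • 1)) * (μ ^ n • S₀ ^ (n + 1)))
            = ∑' n : ℕ, (μ ^ n • (A * S₀ ^ n) - μ ^ (n + 1) • (A * S₀ ^ (n + 1))) := by
              congr 1; funext n; exact hterm n
          _ = A := htel
      -- pointwise kernel lemma for the second identity
      have hA2 : ∀ n : ℕ, A * (S₀ ^ (n + 1) * B₀) = A * S₀ ^ n := by
        intro n
        ext x
        have happ : (S₀ ^ (n + 1)) (B₀ x) = (S₀ ^ n) (S₀ (B₀ x)) := by
          rw [pow_succ]; rfl
        have hz : A (S₀ (B₀ x) - x) = 0 := by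
          have h2x : (A * (S₀ * B₀)) x = A x := by rw [h2₀]
          have : A (S₀ (B₀ x)) = A x := h2x
          rw [map_sub, this, sub_self]
        have hfz : f (S₀ (B₀ x) - x) = 0 := (hAf _).1 hz
        have hfnz : f ((S₀ ^ n) (S₀ (B₀ x) - x)) = 0 := by
          have := pow_bound hb₀ (le_of_lt hc₀) n (S₀ (B₀ x) - x)
          rw [hfz, norm_zero, mul_zero] at this
          exact norm_le_zero_iff.1 this
        have hAnz : A ((S₀ ^ n) (S₀ (B₀ x) - x)) = 0 := (hAf _).2 hfnz
        rw [map_sub, map_sub, sub_eq_zero] at hAnz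
        show A ((S₀ ^ (n + 1)) (B₀ x)) = A ((S₀ ^ n) x)
        rw [happ, hAnz]
      -- second identity: A * (Sl * Bμ) = A
      have hid2 : A * (Sl * (B₀ - μ • 1)) = A := by
        rw [hSrep, ← Summable.tsum_mul_right _ hgsum,
          ← Summable.tsum_mul_left _ (hgsum.mul_right _)]
        have hterm : ∀ n : ℕ, A * ((μ ^ n • S₀ ^ (n + 1)) * (B₀ - μ • 1)) =
            μ ^ n • (A * S₀ ^ n) - μ ^ (n + 1) • (A * S₀ ^ (n + 1)) := by
          intro n
          have hD : S₀ ^ (n + 1) * (B₀ - μ • 1) = S₀ ^ (n + 1) * B₀ - μ • S₀ ^ (n + 1) := by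
            rw [mul_sub, mul_smul_comm, mul_one]
          calc A * ((μ ^ n • S₀ ^ (n + 1)) * (B₀ - μ • 1))
              = μ ^ n • (A * (S₀ ^ (n + 1) * (B₀ - μ • 1))) := by
                rw [smul_mul_assoc, mul_smul_comm]
            _ = μ ^ n • (A * (S₀ ^ (n + 1) * B₀)) - μ ^ n • (μ • (A * S₀ ^ (n + 1))) := by
                rw [hD, mul_sub, mul_smul_comm, smul_sub]
            _ = μ ^ n • (A * S₀ ^ n) - μ ^ (n + 1) • (A * S₀ ^ (n + 1)) := by
                rw [hA2 n, smul_smul, ← pow_succ]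
        calc (∑' n : ℕ, A * ((μ ^ n • S₀ ^ (n + 1)) * (B₀ - μ • 1)))
            = ∑' n : ℕ, (μ ^ n • (A * S₀ ^ n) - μ ^ (n + 1) • (A * S₀ ^ (n + 1))) := by
              congr 1; funext n; exact hterm n
          _ = A := htel
      -- membership in B_{A^{1/2}}
      have hmem : MemBA A Sl := by
        set c : ℝ := (1 - ‖μ‖ * c₀)⁻¹ * c₀ with hcdef
        have hcpos : 0 < c := by
          apply mul_pos _ hc₀
          rw [inv_pos]; linarith
        refine ⟨c, hcpos, fun x => ?_⟩
        rw [hnorm, hnorm]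
        have happly : Sl x = ∑' n : ℕ, (μ ^ n • S₀ ^ (n + 1)) x := by
          rw [hSrep]
          exact (ContinuousLinearMap.apply ℂ H x).map_tsum hgsum
        have hsx : Summable (fun n : ℕ => (μ ^ n • S₀ ^ (n + 1)) x) := by
          exact (ContinuousLinearMap.apply ℂ H x).summable hgsum
        have hfx : f (Sl x) = ∑' n : ℕ, f ((μ ^ n • S₀ ^ (n + 1)) x) := by
          rw [happly]
          exact f.map_tsum hsx
        have hbound : ∀ n : ℕ, ‖f ((μ ^ n • S₀ ^ (n + 1)) x)‖ ≤
            (‖μ‖ * c₀) ^ n * (c₀ * ‖f x‖) := by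
          intro n
          have : (μ ^ n • S₀ ^ (n + 1)) x = μ ^ n • ((S₀ ^ (n + 1)) x) := rfl
          rw [this, map_smul, norm_smul, norm_pow]
          calc ‖μ‖ ^ n * ‖f ((S₀ ^ (n + 1)) x)‖
              ≤ ‖μ‖ ^ n * (c₀ ^ (n + 1) * ‖f x‖) := by
                apply mul_le_mul_of_nonneg_left
                  (pow_bound hb₀ (le_of_lt hc₀) (n + 1) x) (by positivity)
            _ = (‖μ‖ * c₀) ^ n * (c₀ * ‖f x‖) := by ring
        have hsummable : Summable (fun n : ℕ => (‖μ‖ * c₀) ^ n * (c₀ * ‖f x‖)) :=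
          (summable_geometric_of_lt_one (by positivity) hμ2).mul_right _
        have hnsum : Summable (fun n : ℕ => ‖f ((μ ^ n • S₀ ^ (n + 1)) x)‖) :=
          Summable.of_nonneg_of_le (fun n => norm_nonneg _) hbound hsummable
        calc ‖f (Sl x)‖ = ‖∑' n : ℕ, f ((μ ^ n • S₀ ^ (n + 1)) x)‖ := by rw [hfx]
          _ ≤ ∑' n : ℕ, ‖f ((μ ^ n • S₀ ^ (n + 1)) x)‖ := norm_tsum_le_tsum_norm hnsum
          _ ≤ ∑' n : ℕ, (‖μ‖ * c₀) ^ n * (c₀ * ‖f x‖) := Summable.tsum_le_tsum hbound hnsum hsummable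
          _ = (∑' n : ℕ, (‖μ‖ * c₀) ^ n) * (c₀ * ‖f x‖) :=
              tsum_mul_right
          _ = (1 - ‖μ‖ * c₀)⁻¹ * (c₀ * ‖f x‖) := by
              rw [tsum_geometric_of_lt_one (by positivity) hμ2]
          _ = c * ‖f x‖ := by rw [hcdef]; ring
      rw [hB]
      exact ⟨hmem, hid1, hid2⟩
    -- ball is contained in rhoA
    have hball : Metric.ball lam₀ ε ⊆ rhoA A T := by
      intro lam hlam
      obtain ⟨hmem, hid1, hid2⟩ := hloc lam hlam
      show AInv A (lam • (1 : H →L[ℂ] H) - T)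
      set Sl := Ring.inverse (1 - (lam₀ - lam) • S₀) * S₀
      have hBne : lam • (1 : H →L[ℂ] H) - T ≠ 0 := by
        intro h
        rw [h, zero_mul, mul_zero] at hid1
        exact hA0 hid1.symm
      have hSlne : Sl ≠ 0 := by
        intro h
        rw [h, mul_zero, mul_zero] at hid1
        exact hA0 hid1.symm
      exact ⟨hBne, Sl, hSlne, hmem, hid1, hid2⟩
    refine ⟨ε, hεpos, hball, ?_⟩
    -- analyticity at lam₀
    set G : ℂ → (H →L[ℂ] H) :=
      fun lam => P * (Ring.inverse (1 - (lam₀ - lam) • S₀) * S₀) with hGdef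
    have hGanalytic : AnalyticAt ℂ G lam₀ := by
      apply AnalyticAt.mul analyticAt_const
      apply AnalyticAt.mul _ analyticAt_const
      have hinner : AnalyticAt ℂ (fun lam : ℂ => 1 - (lam₀ - lam) • S₀) lam₀ :=
        analyticAt_const.sub ((analyticAt_const.sub analyticAt_id).smul analyticAt_const)
      have hinv : AnalyticAt ℂ Ring.inverse ((1 : H →L[ℂ] H) - (lam₀ - lam₀) • S₀) := by
        simpa using analyticAt_inverse (1 : (H →L[ℂ] H)ˣ)
      exact AnalyticAt.comp (g := Ring.inverse)
        (f := fun lam : ℂ => 1 - (lam₀ - lam) • S₀) hinv hinner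
    have hEq : G =ᶠ[nhds lam₀] R := by
      filter_upwards [Metric.ball_mem_nhds lam₀ hεpos] with lam hlam
      obtain ⟨hmem, hid1, hid2⟩ := hloc lam hlam
      have hin : lam ∈ rhoA A T := hball hlam
      obtain ⟨hScmem, hSc1, hSc2⟩ := hScSpec lam hin
      show P * (Ring.inverse (1 - (lam₀ - lam) • S₀) * S₀) = P * Sc lam
      rw [hPdef]
      exact proj_mul_unique hsa hff hnorm hAf hmem hid2 hSc1
    exact hGanalytic.congr hEq
  -- assemble
  have hopen : IsOpen (rhoA A T) := by
    rw [Metric.isOpen_iff]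
    intro lam hlam
    obtain ⟨ε, hε, hball, _⟩ := main lam hlam
    exact ⟨ε, hε, hball⟩
  refine ⟨hopen, R, fun lam hlam => (main lam hlam).choose_spec.2.2, ?_⟩
  intro lam hlam
  obtain ⟨hScmem, hSc1, hSc2⟩ := hScSpec lam hlam
  set B : H →L[ℂ] H := lam • (1 : H →L[ℂ] H) - T with hBdef
  have hPA : ∀ y : H, A (P y) = A y := fun y => projA_fix hsa y
  have hPf : ∀ y : H, f (P y) = f y := by
    intro y
    have : A (P y - y) = 0 := by rw [map_sub, hPA y, sub_self]
    have := (hAf _).1 this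
    rwa [map_sub, sub_eq_zero] at this
  constructor
  · -- MemBA A (R lam)
    obtain ⟨c, hc, hcb⟩ := hScmem
    refine ⟨c, hc, fun x => ?_⟩
    have : R lam x = P (Sc lam x) := rfl
    rw [this, hnorm, hPf, ← hnorm]
    exact hcb x
  constructor
  · -- A ∘ (B ∘ R lam) = A
    ext x
    show A (B (P (Sc lam x))) = A x
    have hd : f (P (Sc lam x) - Sc lam x) = 0 := by
      apply (hAf _).1
      rw [map_sub, hPA, sub_self]
    have hTd : f (T (P (Sc lam x) - Sc lam x)) = 0 := memBA_ker hnorm hT _ hd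
    have hBd : f (B (P (Sc lam x) - Sc lam x)) = 0 := by
      rw [hBdef]
      show f ((lam • (1 : H →L[ℂ] H) - T) (P (Sc lam x) - Sc lam x)) = 0
      have : (lam • (1 : H →L[ℂ] H) - T) (P (Sc lam x) - Sc lam x) =
          lam • (P (Sc lam x) - Sc lam x) - T (P (Sc lam x) - Sc lam x) := by
        simp [ContinuousLinearMap.sub_apply, ContinuousLinearMap.smul_apply]
      rw [this, map_sub, map_smul, hd, hTd, smul_zero, sub_zero]
    have hABd : A (B (P (Sc lam x) - Sc lam x)) = 0 := (hAf _).2 hBd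
    rw [map_sub, map_sub, sub_eq_zero] at hABd
    rw [hABd]
    have : (A * (B * Sc lam)) x = A x := by rw [hSc1]
    exact this
  · -- A ∘ (R lam ∘ B) = A
    ext x
    show A (P (Sc lam (B x))) = A x
    rw [hPA]
    have : (A * (Sc lam * B)) x = A x := by rw [hSc2]
    exact this
end

section
/- Let T ∈ B_{A^{1/2}}(H) be nonzero and A-invertible in B_{A^{1/2}}(H) with A-inverse S ∈ B_{A^{1/2}}(H) (so S is nonzero and ATS = AST = A). Then r_A(T)·r_A(S) ≥ 1. -/
set_option linter.unusedSectionVars false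
set_option linter.unusedVariables false
set_option linter.deprecated false


variable {H : Type*} [NormedAddCommGroup H] [InnerProductSpace ℂ H] [CompleteSpace H]

section MyAux

/-- Pre-inner-product core induced by a positive operator. -/
noncomputable def aCore (A : H →L[ℂ] H) (hA : A.IsPositive) : PreInnerProductSpace.Core ℂ H where
  inner x y := inner ℂ (A x) y
  conj_inner_symm x y := by
    have hsymm := hA.isSymmetric
    show (starRingEnd ℂ) (inner ℂ (A y) x : ℂ) = (inner ℂ (A x) y : ℂ)
    rw [inner_conj_symm]
    exact (hsymm x y).symm
  re_inner_nonneg x := hA.re_inner_nonneg_left x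
  add_left x y z := by simp [inner_add_left]
  smul_left x y r := by simp [inner_smul_left, mul_comm]

lemma anorm_nonneg (A : H →L[ℂ] H) (x : H) : 0 ≤ anorm A x := Real.sqrt_nonneg _

lemma anorm_sq (A : H →L[ℂ] H) (hA : A.IsPositive) (x : H) :
    anorm A x ^ 2 = RCLike.re (inner ℂ (A x) x : ℂ) :=
  Real.sq_sqrt (hA.re_inner_nonneg_left x)

lemma cs (A : H →L[ℂ] H) (hA : A.IsPositive) (u x : H) :
    ‖(inner ℂ (A u) x : ℂ)‖ ≤ anorm A u * anorm A x := by
  have h : ‖(inner ℂ (A u) x : ℂ)‖ * ‖(inner ℂ (A x) u : ℂ)‖ ≤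
      RCLike.re (inner ℂ (A u) u : ℂ) * RCLike.re (inner ℂ (A x) x : ℂ) :=
    @InnerProductSpace.Core.inner_mul_inner_self_le ℂ H _ _ _ (aCore A hA) u x
  have h2 : (starRingEnd ℂ) (inner ℂ (A x) u : ℂ) = (inner ℂ (A u) x : ℂ) :=
    (aCore A hA).conj_inner_symm u x
  have heq : ‖(inner ℂ (A x) u : ℂ)‖ = ‖(inner ℂ (A u) x : ℂ)‖ := by
    rw [← h2]; exact (RCLike.norm_conj _).symm
  rw [heq, ← sq] at h
  calc ‖(inner ℂ (A u) x : ℂ)‖ = Real.sqrt (‖(inner ℂ (A u) x : ℂ)‖ ^ 2) :=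
        (Real.sqrt_sq (norm_nonneg _)).symm
    _ ≤ Real.sqrt (RCLike.re (inner ℂ (A u) u : ℂ) * RCLike.re (inner ℂ (A x) x : ℂ)) :=
        Real.sqrt_le_sqrt h
    _ = anorm A u * anorm A x := Real.sqrt_mul (hA.re_inner_nonneg_left u) _

lemma apply_eq_zero_of_anorm_eq_zero (A : H →L[ℂ] H) (hA : A.IsPositive) {w : H}
    (hw : anorm A w = 0) : A w = 0 := by
  have h := cs A hA w (A w)
  rw [hw, zero_mul] at h
  have : (‖A w‖ : ℝ) ^ 2 ≤ 0 := by
    calc (‖A w‖ : ℝ) ^ 2 = RCLike.re (inner ℂ (A w) (A w) : ℂ) :=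
          (inner_self_eq_norm_sq (𝕜 := ℂ) (A w)).symm
      _ ≤ ‖(inner ℂ (A w) (A w) : ℂ)‖ := RCLike.re_le_norm _
      _ ≤ 0 := h
  have : ‖A w‖ = 0 := by nlinarith [norm_nonneg (A w)]
  simpa using this

lemma opANorm_nonneg (A T : H →L[ℂ] H) : 0 ≤ opANorm A T :=
  Real.sInf_nonneg fun _ hc => hc.1

lemma bddBelow_aSet (A T : H →L[ℂ] H) :
    BddBelow {c : ℝ | 0 ≤ c ∧ ∀ x : H, anorm A (T x) ≤ c * anorm A x} :=
  ⟨0, fun _ hc => hc.1⟩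

lemma opANorm_le (A T : H →L[ℂ] H) {c : ℝ} (hc : 0 ≤ c)
    (h : ∀ x : H, anorm A (T x) ≤ c * anorm A x) : opANorm A T ≤ c :=
  csInf_le (bddBelow_aSet A T) ⟨hc, h⟩

lemma opANorm_bound (A T : H →L[ℂ] H) (hT : MemBA A T) (x : H) :
    anorm A (T x) ≤ opANorm A T * anorm A x := by
  obtain ⟨c, hc, hb⟩ := hT
  have hne : {c : ℝ | 0 ≤ c ∧ ∀ x : H, anorm A (T x) ≤ c * anorm A x}.Nonempty :=
    ⟨c, le_of_lt hc, hb⟩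
  rcases eq_or_lt_of_le (anorm_nonneg A x) with h0 | h0
  · have : anorm A (T x) ≤ c * anorm A x := hb x
    rw [← h0, mul_zero] at this ⊢
    exact this
  · refine le_of_forall_pos_le_add fun ε hε => ?_
    obtain ⟨d, hd, hdlt⟩ := Real.lt_sInf_add_pos hne (show (0:ℝ) < ε / anorm A x by positivity)
    calc anorm A (T x) ≤ d * anorm A x := hd.2 x
      _ ≤ (opANorm A T + ε / anorm A x) * anorm A x := by
          apply mul_le_mul_of_nonneg_right (le_of_lt hdlt) (le_of_lt h0)
      _ = opANorm A T * anorm A x + ε := by field_simp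

lemma MemBA.mul {A M N : H →L[ℂ] H} (hM : MemBA A M) (hN : MemBA A N) :
    MemBA A (M * N) := by
  obtain ⟨c, hc, hcb⟩ := hM
  obtain ⟨d, hd, hdb⟩ := hN
  refine ⟨c * d, by positivity, fun x => ?_⟩
  calc anorm A ((M * N) x) = anorm A (M (N x)) := rfl
    _ ≤ c * anorm A (N x) := hcb _
    _ ≤ c * (d * anorm A x) := by
        exact mul_le_mul_of_nonneg_left (hdb x) (le_of_lt hc)
    _ = c * d * anorm A x := by ring

lemma MemBA.pow {A T : H →L[ℂ] H} (hT : MemBA A T) (n : ℕ) : MemBA A (T ^ n) := by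
  induction n with
  | zero => exact ⟨1, one_pos, fun x => by simp [pow_zero]⟩
  | succ n ih => rw [pow_succ]; exact ih.mul hT

lemma opANorm_mul_le (A M N : H →L[ℂ] H) (hM : MemBA A M) (hN : MemBA A N) :
    opANorm A (M * N) ≤ opANorm A M * opANorm A N := by
  refine opANorm_le A _ (mul_nonneg (opANorm_nonneg A M) (opANorm_nonneg A N)) fun x => ?_
  calc anorm A ((M * N) x) = anorm A (M (N x)) := rfl
    _ ≤ opANorm A M * anorm A (N x) := opANorm_bound A M hM _
    _ ≤ opANorm A M * (opANorm A N * anorm A x) :=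
        mul_le_mul_of_nonneg_left (opANorm_bound A N hN x) (opANorm_nonneg A M)
    _ = opANorm A M * opANorm A N * anorm A x := by ring

lemma opANorm_pow_le (A T : H →L[ℂ] H) (hT : MemBA A T) (n m : ℕ) :
    opANorm A (T ^ (n * m)) ≤ opANorm A (T ^ n) ^ m := by
  induction m with
  | zero =>
    simp only [Nat.mul_zero, pow_zero]
    exact opANorm_le A _ zero_le_one fun x => by simp
  | succ m ih =>
    have hmul : T ^ (n * (m + 1)) = T ^ (n * m) * T ^ n := by
      rw [← pow_add]; ring_nf
    rw [hmul, pow_succ]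
    calc opANorm A (T ^ (n * m) * T ^ n)
        ≤ opANorm A (T ^ (n * m)) * opANorm A (T ^ n) :=
          opANorm_mul_le A _ _ (hT.pow _) (hT.pow _)
      _ ≤ opANorm A (T ^ n) ^ m * opANorm A (T ^ n) :=
          mul_le_mul_of_nonneg_right ih (opANorm_nonneg A _)

lemma A_pow_eq (A T S : H →L[ℂ] H) (hA : A.IsPositive) (hT : MemBA A T)
    (hTS : A.comp (T.comp S) = A) (n : ℕ) (x : H) :
    A ((T ^ n) ((S ^ n) x)) = A x := by
  induction n with
  | zero => simp
  | succ n ih =>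
    have hSn : (S ^ (n + 1)) x = S ((S ^ n) x) := by
      rw [pow_succ']; rfl
    have hTn : ∀ z, (T ^ (n + 1)) z = (T ^ n) (T z) := fun z => by
      rw [pow_succ]; rfl
    set w := (S ^ n) x with hw
    have hATS : A (T (S w)) = A w := by
      have := congrArg (fun B : H →L[ℂ] H => B w) hTS
      simpa using this
    have hdz : A (T (S w) - w) = 0 := by rw [map_sub, hATS, sub_self]
    have hdan : anorm A (T (S w) - w) = 0 := by
      unfold anorm
      rw [hdz]
      simp
    have h0 : A ((T ^ n) (T (S w) - w)) = 0 := by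
      apply apply_eq_zero_of_anorm_eq_zero A hA
      have hb := opANorm_bound A (T ^ n) (hT.pow n) (T (S w) - w)
      rw [hdan, mul_zero] at hb
      exact le_antisymm hb (anorm_nonneg A _)
    have : A ((T ^ n) (T (S w))) = A ((T ^ n) w) := by
      have hsplit : (T ^ n) (T (S w)) = (T ^ n) w + (T ^ n) (T (S w) - w) := by
        rw [map_sub]; abel
      rw [hsplit, map_add, h0, add_zero]
    rw [hSn, hTn, this]; exact ih

lemma one_le_opANorm_mul (A T S : H →L[ℂ] H) (hA : A.IsPositive) (hA0 : A ≠ 0)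
    (hT : MemBA A T) (hS : MemBA A S) (hTS : A.comp (T.comp S) = A) (n : ℕ) :
    1 ≤ opANorm A (T ^ n) * opANorm A (S ^ n) := by
  obtain ⟨x₀, hx₀⟩ : ∃ x, A x ≠ 0 := by
    by_contra h
    push_neg at h
    exact hA0 (ContinuousLinearMap.ext fun x => by simp [h x])
  set p := RCLike.re (inner ℂ (A x₀) x₀ : ℂ) with hp
  have hp0 : 0 < p := by
    rcases eq_or_lt_of_le (hA.re_inner_nonneg_left x₀) with h | h
    · exfalso
      apply hx₀
      apply apply_eq_zero_of_anorm_eq_zero A hA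
      unfold anorm
      rw [← h, Real.sqrt_zero]
    · exact h
  have key : p ≤ opANorm A (T ^ n) * opANorm A (S ^ n) * p := by
    have h1 : p = RCLike.re (inner ℂ (A ((T ^ n) ((S ^ n) x₀))) x₀ : ℂ) := by
      rw [A_pow_eq A T S hA hT hTS n x₀]
    have h2 : RCLike.re (inner ℂ (A ((T ^ n) ((S ^ n) x₀))) x₀ : ℂ) ≤
        anorm A ((T ^ n) ((S ^ n) x₀)) * anorm A x₀ :=
      le_trans (RCLike.re_le_norm _) (cs A hA _ _)
    have h3 : anorm A ((T ^ n) ((S ^ n) x₀)) ≤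
        opANorm A (T ^ n) * (opANorm A (S ^ n) * anorm A x₀) :=
      le_trans (opANorm_bound A _ (hT.pow n) _)
        (mul_le_mul_of_nonneg_left (opANorm_bound A _ (hS.pow n) x₀) (opANorm_nonneg A _))
    have h4 : anorm A x₀ ^ 2 = p := anorm_sq A hA x₀
    nlinarith [anorm_nonneg A x₀, opANorm_nonneg A (T ^ n), opANorm_nonneg A (S ^ n),
      mul_le_mul_of_nonneg_right h3 (anorm_nonneg A x₀)]
  nlinarith

lemma cross_ineq (A T S : H →L[ℂ] H) (hA : A.IsPositive) (hA0 : A ≠ 0)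
    (hT : MemBA A T) (hS : MemBA A S) (hTS : A.comp (T.comp S) = A) (n m : ℕ+) :
    1 ≤ (opANorm A (T ^ (n : ℕ))) ^ ((((n : ℕ) : ℝ))⁻¹) *
      (opANorm A (S ^ (m : ℕ))) ^ ((((m : ℕ) : ℝ))⁻¹) := by
  set a := opANorm A (T ^ (n : ℕ)) with ha
  set b := opANorm A (S ^ (m : ℕ)) with hb
  have ha0 : 0 ≤ a := opANorm_nonneg A _
  have hb0 : 0 ≤ b := opANorm_nonneg A _
  have hN : (0:ℝ) < ((n : ℕ) : ℝ) := by exact_mod_cast n.pos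
  have hM : (0:ℝ) < ((m : ℕ) : ℝ) := by exact_mod_cast m.pos
  have hprod : 1 ≤ a ^ (m : ℕ) * b ^ (n : ℕ) := by
    have h1 := one_le_opANorm_mul A T S hA hA0 hT hS hTS ((n : ℕ) * (m : ℕ))
    have h2 : opANorm A (T ^ ((n : ℕ) * (m : ℕ))) ≤ a ^ (m : ℕ) :=
      opANorm_pow_le A T hT (n : ℕ) (m : ℕ)
    have h3 : opANorm A (S ^ ((n : ℕ) * (m : ℕ))) ≤ b ^ (n : ℕ) := by
      rw [Nat.mul_comm]
      exact opANorm_pow_le A S hS (m : ℕ) (n : ℕ)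
    calc (1:ℝ) ≤ opANorm A (T ^ ((n : ℕ) * (m : ℕ))) * opANorm A (S ^ ((n : ℕ) * (m : ℕ))) := h1
      _ ≤ a ^ (m : ℕ) * b ^ (n : ℕ) := by
          apply mul_le_mul h2 h3 (opANorm_nonneg A _) (pow_nonneg ha0 _)
  set r : ℝ := (((n : ℕ) : ℝ) * ((m : ℕ) : ℝ))⁻¹ with hr
  have hr0 : 0 ≤ r := by positivity
  have step1 : (1:ℝ) ≤ (a ^ (m : ℕ) * b ^ (n : ℕ)) ^ r := by
    calc (1:ℝ) = 1 ^ r := (Real.one_rpow r).symm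
      _ ≤ (a ^ (m : ℕ) * b ^ (n : ℕ)) ^ r := Real.rpow_le_rpow zero_le_one hprod hr0
  have step2 : (a ^ (m : ℕ) * b ^ (n : ℕ)) ^ r =
      a ^ ((((n : ℕ) : ℝ))⁻¹) * b ^ ((((m : ℕ) : ℝ))⁻¹) := by
    rw [Real.mul_rpow (pow_nonneg ha0 _) (pow_nonneg hb0 _)]
    rw [← Real.rpow_natCast a (m : ℕ), ← Real.rpow_natCast b (n : ℕ),
      ← Real.rpow_mul ha0, ← Real.rpow_mul hb0]
    congr 1
    · congr 1
      rw [hr]; field_simp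
    · congr 1
      rw [hr]; field_simp
  rw [step2] at step1
  exact step1


end MyAux

theorem stmt16 (A T S : H →L[ℂ] H) (hA : A.IsPositive) (hA0 : A ≠ 0)
    (hT : MemBA A T) (hT0 : T ≠ 0) (hSmem : MemBA A S) (hS0 : S ≠ 0)
    (hTS : A.comp (T.comp S) = A) (hST : A.comp (S.comp T) = A) :
    1 ≤ rA A T * rA A S := by
  set f : ℕ+ → ℝ := fun n => (opANorm A (T ^ (n : ℕ))) ^ ((((n : ℕ) : ℝ))⁻¹) with hf
  set g : ℕ+ → ℝ := fun m => (opANorm A (S ^ (m : ℕ))) ^ ((((m : ℕ) : ℝ))⁻¹) with hg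
  have hfg : ∀ n m : ℕ+, 1 ≤ f n * g m := fun n m =>
    cross_ineq A T S hA hA0 hT hSmem hTS n m
  have hf0 : ∀ n, 0 ≤ f n := fun n => Real.rpow_nonneg (opANorm_nonneg A _) _
  have hg0 : ∀ m, 0 ≤ g m := fun m => Real.rpow_nonneg (opANorm_nonneg A _) _
  have hgpos : ∀ m, 0 < g m := fun m => by nlinarith [hfg 1 m, hf0 1, hg0 m]
  have hrT : rA A T = ⨅ n : ℕ+, f n := rfl
  have hrS : rA A S = ⨅ m : ℕ+, g m := rfl
  have hα : 1 / g 1 ≤ rA A T := by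
    rw [hrT]
    refine le_ciInf fun n => ?_
    rw [div_le_iff₀ (hgpos 1)]
    exact hfg n 1
  have hαpos : 0 < rA A T := lt_of_lt_of_le (div_pos one_pos (hgpos 1)) hα
  have hβ : 1 / rA A T ≤ rA A S := by
    rw [hrS]
    refine le_ciInf fun m => ?_
    have hm : 1 / g m ≤ rA A T := by
      rw [hrT]
      refine le_ciInf fun n => ?_
      rw [div_le_iff₀ (hgpos m)]
      exact hfg n m
    rw [div_le_iff₀ hαpos]
    rw [div_le_iff₀ (hgpos m)] at hm
    linarith [hm, mul_comm (rA A T) (g m)]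
  calc (1:ℝ) = rA A T * (1 / rA A T) := by field_simp
    _ ≤ rA A T * rA A S := mul_le_mul_of_nonneg_left hβ (le_of_lt hαpos)
end

section
/- Let T ∈ B_{A^{1/2}}(H) be nonzero. Then T is A-invertible in B_{A^{1/2}}(H) if and only if there exist operators S₁, S₂ ∈ B_{A^{1/2}}(H) such that ATS₁ = AS₂T = A. -/
variable {H : Type*} [NormedAddCommGroup H] [InnerProductSpace ℂ H] [CompleteSpace H]

lemma pos_inner_zero {A : H →L[ℂ] H} (hA : A.IsPositive) {w : H}
    (h : RCLike.re (inner ℂ (A w) w : ℂ) = 0) : A w = 0 := by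
  have hsym := hA.1
  set y := A w with hy
  set r := RCLike.re (inner ℂ (A w) y : ℂ) with hr
  set s := RCLike.re (inner ℂ (A y) y : ℂ) with hs
  have hs0 : 0 ≤ s := hA.re_inner_nonneg_left y
  have key : ∀ t : ℝ, 0 ≤ 2 * t * r + t ^ 2 * s := by
    intro t
    have h0 := hA.re_inner_nonneg_left (w + (t : ℂ) • y)
    have hsymm : (inner ℂ (A y) w : ℂ) = starRingEnd ℂ (inner ℂ (A w) y) := by
      exact (hsym y w).trans (inner_conj_symm _ _).symm
    have hexp : RCLike.re (inner ℂ (A (w + (t : ℂ) • y)) (w + (t : ℂ) • y) : ℂ)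
        = 2 * t * r + t ^ 2 * s := by
      simp only [map_add, map_smul, inner_add_left, inner_add_right, inner_smul_left,
        inner_smul_right, hsymm, map_add, RCLike.conj_ofReal, map_mul, RCLike.conj_conj]
      simp only [← hy, ← hr, ← hs]
      simp [RCLike.re_ofReal_mul, h, Complex.add_re, Complex.mul_re, Complex.ofReal_re,
        Complex.ofReal_im, Complex.conj_re, Complex.conj_im]
      simp only [hr, hs, hy, RCLike.re_to_complex, inner_self_eq_norm_sq_to_K]
      ring_nf
      rfl
    rw [hexp] at h0
    exact h0
  have hr0 : r = 0 := by
    have h2 := key (-(r / (s + 1)))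
    have hu : (0:ℝ) < s + 1 := by linarith
    have h3 : 0 ≤ (2 * (-(r / (s + 1))) * r + (-(r / (s + 1))) ^ 2 * s) * (s + 1) ^ 2 :=
      mul_nonneg h2 (by positivity)
    have h4 : (2 * (-(r / (s + 1))) * r + (-(r / (s + 1))) ^ 2 * s) * (s + 1) ^ 2
        = -(r ^ 2 * (s + 2)) := by
      field_simp
      ring
    rw [h4] at h3
    nlinarith [sq_nonneg r]
  have : ‖A w‖ ^ 2 = 0 := by rw [← inner_self_eq_norm_sq (𝕜 := ℂ) (A w)]; exact hr0
  have := pow_eq_zero_iff (n := 2) (by norm_num) |>.mp this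
  exact norm_eq_zero.mp this

theorem stmt17 (A T : H →L[ℂ] H) (hA : A.IsPositive) (hA0 : A ≠ 0)
    (hT : MemBA A T) (hT0 : T ≠ 0) :
    AInv A T ↔ ∃ S₁ S₂ : H →L[ℂ] H, MemBA A S₁ ∧ MemBA A S₂ ∧
      A.comp (T.comp S₁) = A ∧ A.comp (S₂.comp T) = A := by
  constructor
  · rintro ⟨-, S, hS0, hS, hc1, hc2⟩
    exact ⟨S, S, hS, hS, hc1, hc2⟩
  · rintro ⟨S₁, S₂, hS1, hS2, hc1, hc2⟩
    have h1' : ∀ x, A (T (S₁ x)) = A x := fun x => by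
      have := ContinuousLinearMap.ext_iff.mp hc1 x; simpa using this
    have h2' : ∀ x, A (S₂ (T x)) = A x := fun x => by
      have := ContinuousLinearMap.ext_iff.mp hc2 x; simpa using this
    have key : ∀ x, A (S₁ x) = A (S₂ x) := by
      intro x
      have hv : A (T (S₁ x) - x) = 0 := by rw [map_sub, h1' x, sub_self]
      obtain ⟨c, hc, hbd⟩ := hS2
      have hz : anorm A (T (S₁ x) - x) = 0 := by unfold anorm; rw [hv]; simp
      have hb := hbd (T (S₁ x) - x)
      rw [hz, mul_zero] at hb
      have heq : anorm A (S₂ (T (S₁ x) - x)) = 0 :=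
        le_antisymm hb (Real.sqrt_nonneg _)
      unfold anorm at heq
      have hle := Real.sqrt_eq_zero'.mp heq
      have hnn := hA.re_inner_nonneg_left (S₂ (T (S₁ x) - x))
      have hre : RCLike.re (inner ℂ (A (S₂ (T (S₁ x) - x))) (S₂ (T (S₁ x) - x)) : ℂ) = 0 :=
        le_antisymm hle hnn
      have hQ := pos_inner_zero hA hre
      rw [map_sub, map_sub, sub_eq_zero] at hQ
      exact (h2' (S₁ x)).symm.trans hQ
    have hS10 : S₁ ≠ 0 := by
      intro h0
      apply hA0
      ext x
      have := h1' x
      rw [h0] at this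
      simpa using this.symm
    refine ⟨hT0, S₁, hS10, hS1, hc1, ?_⟩
    ext x
    simp only [ContinuousLinearMap.comp_apply]
    exact (key (T x)).trans (h2' x)
end

section
/- Let T, S ∈ B_A(H) be nonzero, and let T♯, S♯ ∈ B_A(H) be their A-adjoints, i.e., bounded operators with A·T♯ = T*A and A·S♯ = S*A whose ranges are contained in the closure of the range of A. Then ATS = AST = A if and only if A·T♯·S♯ = A·S♯·T♯ = A; that is, T is A-invertible in B_A(H) with A-inverse S if and only if T♯ is A-invertible in B_A(H) with A-inverse S♯. -/
variable {H : Type*} [NormedAddCommGroup H] [InnerProductSpace ℂ H] [CompleteSpace H]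

theorem stmt18 (A T S Ts Ss : H →L[ℂ] H) (hA : A.IsPositive) (hA0 : A ≠ 0)
    (hT0 : T ≠ 0) (hS0 : S ≠ 0)
    (hTmem : Set.range (⇑((ContinuousLinearMap.adjoint T).comp A)) ⊆ Set.range (⇑A))
    (hSmem : Set.range (⇑((ContinuousLinearMap.adjoint S).comp A)) ⊆ Set.range (⇑A))
    (hTsmem : Set.range (⇑((ContinuousLinearMap.adjoint Ts).comp A)) ⊆ Set.range (⇑A))
    (hSsmem : Set.range (⇑((ContinuousLinearMap.adjoint Ss).comp A)) ⊆ Set.range (⇑A))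
    (hTs : A.comp Ts = (ContinuousLinearMap.adjoint T).comp A)
    (hTsr : Set.range (⇑Ts) ⊆ closure (Set.range (⇑A)))
    (hSs : A.comp Ss = (ContinuousLinearMap.adjoint S).comp A)
    (hSsr : Set.range (⇑Ss) ⊆ closure (Set.range (⇑A))) :
    (A.comp (T.comp S) = A ∧ A.comp (S.comp T) = A) ↔
      (A.comp (Ts.comp Ss) = A ∧ A.comp (Ss.comp Ts) = A) := by
  have hAadj : ContinuousLinearMap.adjoint A = A := hA.isSelfAdjoint
  have key : ∀ X : H →L[ℂ] H,
      (ContinuousLinearMap.adjoint X).comp A = A ↔ A.comp X = A := by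
    intro X
    constructor
    · intro h
      have := congrArg ContinuousLinearMap.adjoint h
      simpa [ContinuousLinearMap.adjoint_comp, hAadj] using this
    · intro h
      have := congrArg ContinuousLinearMap.adjoint h
      simpa [ContinuousLinearMap.adjoint_comp, hAadj] using this
  have e1 : A.comp (Ts.comp Ss) = (ContinuousLinearMap.adjoint (S.comp T)).comp A := by
    calc A.comp (Ts.comp Ss) = (A.comp Ts).comp Ss := by
          rw [ContinuousLinearMap.comp_assoc]
      _ = ((ContinuousLinearMap.adjoint T).comp A).comp Ss := by rw [hTs]
      _ = (ContinuousLinearMap.adjoint T).comp (A.comp Ss) := by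
          rw [ContinuousLinearMap.comp_assoc]
      _ = (ContinuousLinearMap.adjoint T).comp ((ContinuousLinearMap.adjoint S).comp A) := by
          rw [hSs]
      _ = (ContinuousLinearMap.adjoint (S.comp T)).comp A := by
          rw [ContinuousLinearMap.adjoint_comp, ContinuousLinearMap.comp_assoc]
  have e2 : A.comp (Ss.comp Ts) = (ContinuousLinearMap.adjoint (T.comp S)).comp A := by
    calc A.comp (Ss.comp Ts) = (A.comp Ss).comp Ts := by
          rw [ContinuousLinearMap.comp_assoc]
      _ = ((ContinuousLinearMap.adjoint S).comp A).comp Ts := by rw [hSs]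
      _ = (ContinuousLinearMap.adjoint S).comp (A.comp Ts) := by
          rw [ContinuousLinearMap.comp_assoc]
      _ = (ContinuousLinearMap.adjoint S).comp ((ContinuousLinearMap.adjoint T).comp A) := by
          rw [hTs]
      _ = (ContinuousLinearMap.adjoint (T.comp S)).comp A := by
          rw [ContinuousLinearMap.adjoint_comp, ContinuousLinearMap.comp_assoc]
  rw [e1, e2, key (S.comp T), key (T.comp S)]
  tauto
end
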